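/- arXiv:2109.01515 — 4 statements merged into one kernel-verified Lean document; each statement's English description precedes it below -/
import Mathlib

section
/- Let r > 0 and 0 < x < y be real numbers. Then (ψ(y+r) − ψ(r)) / (ψ(x+r) − ψ(r)) < y/x, where ψ denotes the digamma function. -/
/-- The digamma function `ψ(x) = Γ'(x)/Γ(x)`. -/
noncomputable def digamma (x : ℝ) : ℝ := deriv Real.Gamma x / Real.Gamma x

open Real Set Filter Topology

private lemma dGamma {x : ℝ} (hx : 0 < x) : DifferentiableAt ℝ Real.Gamma x :=
  Real.differentiableAt_Gamma fun m ↦ by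
    have : (0:ℝ) ≤ m := m.cast_nonneg
    intro h; rw [h] at hx; linarith

private lemma dlogGamma {x : ℝ} (hx : 0 < x) :
    DifferentiableAt ℝ (Real.log ∘ Real.Gamma) x :=
  (dGamma hx).log (Real.Gamma_pos_of_pos hx).ne'

private lemma digamma_eq {x : ℝ} (hx : 0 < x) :
    digamma x = deriv (Real.log ∘ Real.Gamma) x := by
  rw [Function.comp_def, deriv.log (dGamma hx) (Real.Gamma_pos_of_pos hx).ne', digamma]

/-- Recurrence: ψ(x+1) = ψ(x) + 1/x. -/
private lemma digamma_rec {x : ℝ} (hx : 0 < x) : digamma (x + 1) = digamma x + 1 / x := by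
  rw [digamma_eq (by linarith), digamma_eq hx]
  rw [← deriv_comp_add_const, one_div, ← Real.deriv_log,
    ← deriv_add (dlogGamma hx) (Real.differentiableAt_log hx.ne')]
  apply Filter.EventuallyEq.deriv_eq
  filter_upwards [eventually_gt_nhds hx] with t ht
  simp only [Function.comp_apply, Real.Gamma_add_one ht.ne',
    Real.log_mul ht.ne' (Real.Gamma_pos_of_pos ht).ne', add_comm, Pi.add_apply]

/-- ψ is monotone on positive reals. -/
private lemma digamma_mono {a b : ℝ} (ha : 0 < a) (hab : a ≤ b) :
    digamma a ≤ digamma b := by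
  have hb : 0 < b := lt_of_lt_of_le ha hab
  rw [digamma_eq ha, digamma_eq hb]
  exact Real.convexOn_log_Gamma.monotoneOn_deriv
    (fun t ht => dlogGamma ht) ha hb hab

private lemma digamma_add_nat {x : ℝ} (hx : 0 < x) (n : ℕ) :
    digamma (x + n) = digamma x + ∑ k ∈ Finset.range n, 1 / (x + k) := by
  induction n with
  | zero => simp
  | succ n ih =>
    have h1 : (0:ℝ) < x + n := by positivity
    have : x + (n + 1 : ℕ) = (x + n) + 1 := by push_cast; ring
    rw [this, digamma_rec h1, ih, Finset.sum_range_succ, add_assoc]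

private lemma tendsto_digamma_diff {a b : ℝ} (ha : 0 < a) (hab : a ≤ b) :
    Tendsto (fun n : ℕ => digamma (b + n) - digamma (a + n)) atTop (𝓝 0) := by
  obtain ⟨m, hm⟩ := exists_nat_ge (b - a)
  have key : ∀ n : ℕ, 0 ≤ digamma (b + n) - digamma (a + n) ∧
      digamma (b + n) - digamma (a + n) ≤ m / (a + n) := by
    intro n
    have han : (0:ℝ) < a + n := by positivity
    have hbn : (0:ℝ) < b + n := by linarith
    constructor
    · have := digamma_mono han (by linarith : a + n ≤ b + n)
      linarith
    · have h1 : digamma (b + n) ≤ digamma ((a + n) + m) := by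
        apply digamma_mono hbn; linarith
      have h2 : digamma ((a + n) + m) = digamma (a + n)
          + ∑ k ∈ Finset.range m, 1 / (a + n + k) := digamma_add_nat han m
      have h3 : ∑ k ∈ Finset.range m, 1 / (a + n + k) ≤ m / (a + n) := by
        rw [div_eq_mul_one_div (m:ℝ)]
        calc ∑ k ∈ Finset.range m, 1 / (a + n + k)
            ≤ ∑ _k ∈ Finset.range m, 1 / (a + n) := by
              apply Finset.sum_le_sum
              intro k _
              apply one_div_le_one_div_of_le han
              have : (0:ℝ) ≤ k := k.cast_nonneg
              linarith
          _ = m * (1 / (a + n)) := by rw [Finset.sum_const, Finset.card_range, nsmul_eq_mul]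
      linarith
  have hlim : Tendsto (fun n : ℕ => (m:ℝ) / (a + n)) atTop (𝓝 0) := by
    apply Tendsto.div_atTop tendsto_const_nhds
    apply tendsto_atTop_add_const_left
    exact tendsto_natCast_atTop_atTop
  exact squeeze_zero (fun n => (key n).1) (fun n => (key n).2) hlim

/-- Series representation: ψ(a+t) - ψ(a) = Σ t/((a+k)(a+t+k)). -/
private lemma hasSum_digamma_diff {a t : ℝ} (ha : 0 < a) (ht : 0 < t) :
    HasSum (fun k : ℕ => t / ((a + k) * (a + t + k))) (digamma (a + t) - digamma a) := by
  have hnonneg : ∀ k : ℕ, 0 ≤ t / ((a + k) * (a + t + k)) := by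
    intro k
    have h1 : (0:ℝ) < a + k := by positivity
    have h2 : (0:ℝ) < a + t + k := by positivity
    positivity
  rw [hasSum_iff_tendsto_nat_of_nonneg hnonneg]
  have hpart : ∀ n : ℕ, ∑ k ∈ Finset.range n, t / ((a + k) * (a + t + k))
      = (digamma (a + t) - digamma a) - (digamma ((a + t) + n) - digamma (a + n)) := by
    intro n
    have h1 := digamma_add_nat ha n
    have h2 := digamma_add_nat (by linarith : (0:ℝ) < a + t) n
    have hterm : ∀ k ∈ Finset.range n, t / ((a + k) * (a + t + k))
        = 1 / (a + k) - 1 / (a + t + k) := by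
      intro k _
      have h1 : (0:ℝ) < a + k := by positivity
      have h2 : (0:ℝ) < a + t + k := by positivity
      field_simp
      ring
    rw [Finset.sum_congr rfl hterm, Finset.sum_sub_distrib]
    rw [eq_sub_iff_add_eq]
    have e2 : digamma (a + t + n) = digamma (a + t)
        + ∑ k ∈ Finset.range n, 1 / (a + t + k) := h2
    have e1 : digamma (a + n) = digamma a + ∑ k ∈ Finset.range n, 1 / (a + k) := h1
    rw [e1, e2]; ring
  simp only [hpart]
  have := tendsto_digamma_diff ha (by linarith : a ≤ a + t)
  have h0 : Tendsto (fun n : ℕ => digamma ((a + t) + n) - digamma (a + n)) atTop (𝓝 0) := this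
  have := tendsto_const_nhds (x := digamma (a + t) - digamma a) (f := atTop (α := ℕ)) |>.sub h0
  simpa using this

theorem digamma_ratio_lt (r x y : ℝ) (hr : 0 < r) (hx : 0 < x) (hxy : x < y) :
    (digamma (y + r) - digamma r) / (digamma (x + r) - digamma r) < y / x := by
  have hy : 0 < y := hx.trans hxy
  have hA : HasSum (fun k : ℕ => y / ((r + k) * (r + y + k)))
      (digamma (r + y) - digamma r) := hasSum_digamma_diff hr hy
  have hB : HasSum (fun k : ℕ => x / ((r + k) * (r + x + k)))
      (digamma (r + x) - digamma r) := hasSum_digamma_diff hr hx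
  rw [add_comm r y] at hA
  rw [add_comm r x] at hB
  set A := digamma (y + r) - digamma r with hAdef
  set B := digamma (x + r) - digamma r with hBdef
  have hA : HasSum (fun k : ℕ => y / ((r + k) * (r + y + k))) A := by
    have : ∀ k : ℕ, y / ((r + k) * (r + y + k)) = y / ((r + k) * (y + r + k)) := by
      intro k; ring_nf
    simpa [this] using hA
  have hB : HasSum (fun k : ℕ => x / ((r + k) * (r + x + k))) B := by
    have : ∀ k : ℕ, x / ((r + k) * (r + x + k)) = x / ((r + k) * (x + r + k)) := by
      intro k; ring_nf
    simpa [this] using hB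
  -- B > 0
  have hBpos : 0 < B := by
    have hle : x / ((r + (0:ℕ)) * (r + x + (0:ℕ))) ≤ B := by
      have := Summable.le_tsum hB.summable 0 fun j _ => by
          have h1 : (0:ℝ) < r + (j:ℝ) := by positivity
          have h2 : (0:ℝ) < r + x + (j:ℝ) := by positivity
          positivity
      rwa [hB.tsum_eq] at this
    calc (0:ℝ) < x / ((r + (0:ℕ)) * (r + x + (0:ℕ))) := by
          have h1 : (0:ℝ) < r + ((0:ℕ):ℝ) := by positivity
          have h2 : (0:ℝ) < r + x + ((0:ℕ):ℝ) := by positivity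
          positivity
      _ ≤ B := hle
  -- key inequality: x * A < y * B
  have hxA : HasSum (fun k : ℕ => x * (y / ((r + k) * (r + y + k)))) (x * A) := hA.mul_left x
  have hyB : HasSum (fun k : ℕ => y * (x / ((r + k) * (r + x + k)))) (y * B) := hB.mul_left y
  have hkey : x * A < y * B := by
    rw [← hxA.tsum_eq, ← hyB.tsum_eq]
    apply Summable.tsum_lt_tsum_of_nonneg (i := 0)
    · intro k
      have h1 : (0:ℝ) < r + k := by positivity
      have h2 : (0:ℝ) < r + y + k := by positivity
      positivity
    · intro k
      have h1 : (0:ℝ) < r + k := by positivity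
      have h2 : (0:ℝ) < r + y + k := by positivity
      have h3 : (0:ℝ) < r + x + k := by positivity
      rw [mul_div_assoc', mul_div_assoc', mul_comm x y]
      apply div_le_div_of_nonneg_left (by positivity) (by positivity)
      apply mul_le_mul_of_nonneg_left _ h1.le
      linarith
    · have h1 : (0:ℝ) < r + (0:ℕ) := by positivity
      have h2 : (0:ℝ) < r + y + (0:ℕ) := by positivity
      have h3 : (0:ℝ) < r + x + (0:ℕ) := by positivity
      rw [mul_div_assoc', mul_div_assoc', mul_comm x y]
      apply div_lt_div_of_pos_left (by positivity) (by positivity)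
      apply mul_lt_mul_of_pos_left _ h1
      linarith
    · exact hyB.summable
  rw [div_lt_div_iff₀ hBpos hx]
  linarith [hkey]
end

section
/- Let r ∈ [0, ∞) and let γ_{h^{(r)}} be the common limit of the sequences y_n(r) and z_n(r). For each natural number n ≥ 1, with A(n,r) = h_n^{(r)}/n^r − ∫_n^{n+1} h_x^{(r)}/x^r dx and B(n,r) = ∫_n^{n+1} h_x^{(r)}/x^r dx, one has A(n,r) < γ_{h^{(r)}} − z_n(r) < A(n,r) + h_{n+1}^{(r)}/(n+1)^r, and B(n,r) − h_{n+1}^{(r)}/(n+1)^r < y_n(r) − γ_{h^{(r)}} < B(n,r). -/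
open MeasureTheory Filter Topology

/-- The rising factorial `x^{r̄} = Γ(x+r)/Γ(x)`. -/
noncomputable def rise (x r : ℝ) : ℝ := Real.Gamma (x + r) / Real.Gamma x

/-- The analytic extension of the hyperharmonic numbers:
`h_x^{(r)} = (x^{r̄}/(x Γ(r)))(ψ(x+r) − ψ(r))` for `r > 0`, and `h_x^{(0)} = 1/x`. -/
noncomputable def hyp (r x : ℝ) : ℝ :=
  if r = 0 then 1 / x
  else rise x r / (x * Real.Gamma r) * (digamma (x + r) - digamma r)

/-- `y_n(r) = ∑_{k=1}^n h_k^{(r)}/k^r − ∫_1^n h_x^{(r)}/x^r dx`. -/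
noncomputable def yseq (r : ℝ) (n : ℕ) : ℝ :=
  ∑ k ∈ Finset.Icc 1 n, hyp r k / (k : ℝ) ^ r - ∫ x in (1:ℝ)..(n:ℝ), hyp r x / x ^ r

/-- `z_n(r) = ∑_{k=1}^{n-1} h_k^{(r)}/k^r − ∫_1^n h_x^{(r)}/x^r dx`. -/
noncomputable def zseq (r : ℝ) (n : ℕ) : ℝ :=
  ∑ k ∈ Finset.Icc 1 (n - 1), hyp r k / (k : ℝ) ^ r - ∫ x in (1:ℝ)..(n:ℝ), hyp r x / x ^ r

/-- `b_n(r) = ∑_{k=1}^n h_k^{(r)}/k^{r̄} − ∫_1^n h_x^{(r)}/x^{r̄} dx`. -/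
noncomputable def bseq (r : ℝ) (n : ℕ) : ℝ :=
  ∑ k ∈ Finset.Icc 1 n, hyp r k / rise k r - ∫ x in (1:ℝ)..(n:ℝ), hyp r x / rise x r

/-- `a_n(r) = ∑_{k=1}^{n-1} h_k^{(r)}/k^{r̄} − ∫_1^n h_x^{(r)}/x^{r̄} dx`. -/
noncomputable def aseq (r : ℝ) (n : ℕ) : ℝ :=
  ∑ k ∈ Finset.Icc 1 (n - 1), hyp r k / rise k r - ∫ x in (1:ℝ)..(n:ℝ), hyp r x / rise x r

namespace YZaux

open Real Filter Topology MeasureTheory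


lemma base_summable : Summable (fun k : ℕ => (((k : ℝ) + 1) ^ 2)⁻¹) := by
  have := (summable_nat_add_iff (f := fun n : ℕ => ((n : ℝ) ^ 2)⁻¹) 1).2 ?_
  · exact this.congr (by intro k; push_cast; ring_nf)
  · simpa [one_div] using Real.summable_one_div_nat_pow.2 (by norm_num : 1 < 2)

lemma lin_bound {t : ℝ} (ht : 0 < t) (k : ℕ) : min t 1 * ((k : ℝ) + 1) ≤ t + k := by
  rcases le_total t 1 with h | h
  · rw [min_eq_left h]
    nlinarith [Nat.cast_nonneg (α := ℝ) k]
  · rw [min_eq_right h]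
    nlinarith [Nat.cast_nonneg (α := ℝ) k]

lemma pos_add {t : ℝ} (ht : 0 < t) (k : ℕ) : 0 < t + (k : ℝ) := by
  have := Nat.cast_nonneg (α := ℝ) k; linarith

lemma summable_sq {t : ℝ} (ht : 0 < t) : Summable (fun k : ℕ => (((t : ℝ) + k) ^ 2)⁻¹) := by
  have hm : 0 < min t 1 := lt_min ht one_pos
  refine Summable.of_nonneg_of_le (fun k => by positivity)
    (fun k => ?_) (base_summable.mul_left ((min t 1) ^ 2)⁻¹)
  have h1 := lin_bound ht k
  have h2 : (0:ℝ) < min t 1 * ((k : ℝ) + 1) := by positivity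
  have : (min t 1 * ((k : ℝ) + 1)) ^ 2 ≤ (t + k) ^ 2 := by nlinarith
  calc ((t + (k:ℝ)) ^ 2)⁻¹ ≤ ((min t 1 * ((k : ℝ) + 1)) ^ 2)⁻¹ := by
        apply inv_anti₀ (by positivity) this
    _ = ((min t 1) ^ 2)⁻¹ * (((k : ℝ) + 1) ^ 2)⁻¹ := by rw [mul_pow, mul_inv]




/-- summability of 1/((a+k)(b+k)) -/
lemma summable_pair {a b : ℝ} (ha : 0 < a) (hb : 0 < b) :
    Summable (fun k : ℕ => ((a + k) * (b + k))⁻¹) := by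
  have hm : 0 < min a b := lt_min ha hb
  refine Summable.of_nonneg_of_le (fun k => by positivity) (fun k => ?_) (summable_sq hm)
  have h1 : min a b + (k:ℝ) ≤ a + k := by have := min_le_left a b; linarith
  have h2 : min a b + (k:ℝ) ≤ b + k := by have := min_le_right a b; linarith
  have h3 := pos_add hm k
  apply inv_anti₀ (by positivity)
  calc (min a b + (k:ℝ)) ^ 2 = (min a b + k) * (min a b + k) := sq (min a b + k) ▸ by ring
    _ ≤ (a + k) * (b + k) := by nlinarith

/-- telescoping: ∑ 1/((x+k)(x+k+1)) = 1/x -/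
lemma hasSum_telescope {x : ℝ} (hx : 0 < x) :
    HasSum (fun k : ℕ => ((x + k) * (x + k + 1))⁻¹) x⁻¹ := by
  have hsum : Summable (fun k : ℕ => ((x + k) * (x + k + 1))⁻¹) := by
    have := summable_pair hx (by linarith : (0:ℝ) < x + 1)
    refine this.congr fun k => ?_
    push_cast; ring_nf
  refine (hasSum_iff_tendsto_nat_of_summable_norm ?_).2 ?_
  · exact hsum.abs.congr fun k => (Real.norm_eq_abs _).symm
  · have key : ∀ n : ℕ, ∑ k ∈ Finset.range n, ((x + k) * (x + k + 1))⁻¹ = x⁻¹ - (x + n)⁻¹ := by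
      intro n
      induction n with
      | zero => simp
      | succ n ih =>
        rw [Finset.sum_range_succ, ih]
        have h1 := pos_add hx n
        have h2 : (0:ℝ) < x + n + 1 := by linarith
        push_cast
        field_simp
        ring
    simp_rw [key]
    have : Tendsto (fun n : ℕ => (x + n)⁻¹) atTop (𝓝 0) := by
      apply Tendsto.inv_tendsto_atTop
      exact tendsto_atTop_add_const_left _ _ tendsto_natCast_atTop_atTop
    simpa using (tendsto_const_nhds (x := x⁻¹)).sub this



/-- the term of the digamma series -/
noncomputable def g (k : ℕ) (y : ℝ) : ℝ := ((k : ℝ) + 1)⁻¹ - (y + k)⁻¹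

noncomputable def dig (y : ℝ) : ℝ := -eulerMascheroniConstant + ∑' k : ℕ, g k y

noncomputable def trig (y : ℝ) : ℝ := ∑' k : ℕ, ((y + (k : ℝ)) ^ 2)⁻¹

lemma g_eq {k : ℕ} {y : ℝ} (hy : 0 < y) :
    g k y = (y - 1) * ((1 + (k:ℝ)) * (y + k))⁻¹ := by
  have h1 : ((k:ℝ) + 1) ≠ 0 := by have : (0:ℝ) ≤ (k:ℝ) := Nat.cast_nonneg k; linarith
  have h2 : (y + (k:ℝ)) ≠ 0 := (pos_add hy k).ne'
  rw [g]
  field_simp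
  ring

lemma summable_g {y : ℝ} (hy : 0 < y) : Summable (fun k : ℕ => g k y) := by
  have := (summable_pair one_pos hy).mul_left (y - 1)
  exact this.congr fun k => (g_eq hy).symm

lemma g_abs_bound {a b y : ℝ} (ha : 0 < a) (hy1 : a < y) (hy2 : y < b) (k : ℕ) :
    ‖g k y‖ ≤ (|b| + 1) * ((min a 1) * ((k:ℝ) + 1) ^ 2)⁻¹ := by
  have hy : 0 < y := ha.trans hy1
  have hk0 : (0:ℝ) ≤ (k:ℝ) := Nat.cast_nonneg k
  have h2 : (0:ℝ) < y + k := pos_add hy k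
  have hm : 0 < min a 1 := lt_min ha one_pos
  rw [g_eq hy, Real.norm_eq_abs, abs_mul]
  have e1 : |y - 1| ≤ |b| + 1 := by
    rw [abs_le]; constructor
    · have : -|b| ≤ y := by cases abs_cases b with
        | inl h => nlinarith
        | inr h => nlinarith
      linarith
    · have : y ≤ |b| := by cases abs_cases b with
        | inl h => nlinarith
        | inr h => nlinarith
      linarith
  have e2 : |((1 + (k:ℝ)) * (y + k))⁻¹| ≤ ((min a 1) * ((k:ℝ) + 1) ^ 2)⁻¹ := by
    rw [abs_of_nonneg (by positivity)]
    apply inv_anti₀ (by positivity)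
    have h3 : min a 1 * ((k:ℝ) + 1) ≤ y + k := by
      have hma : min a 1 ≤ a := min_le_left a 1
      have hm1 : min a 1 ≤ 1 := min_le_right a 1
      nlinarith
    nlinarith
  calc |y - 1| * |((1 + (k:ℝ)) * (y + k))⁻¹|
      ≤ (|b| + 1) * ((min a 1) * ((k:ℝ) + 1) ^ 2)⁻¹ := by
        apply mul_le_mul e1 e2 (abs_nonneg _) (by positivity)

lemma summable_majorant {a b : ℝ} (ha : 0 < a) :
    Summable (fun k : ℕ => (|b| + 1) * ((min a 1) * ((k:ℝ) + 1) ^ 2)⁻¹) := by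
  have hb0 : Summable (fun n : ℕ => ((n : ℝ) ^ 2)⁻¹) := by
    simpa [one_div] using Real.summable_one_div_nat_pow.2 (by norm_num : 1 < 2)
  have hb : Summable (fun k : ℕ => (((k : ℝ) + 1) ^ 2)⁻¹) := by
    have := (summable_nat_add_iff (f := fun n : ℕ => ((n : ℝ) ^ 2)⁻¹) 1).2 hb0
    exact this.congr (by intro k; push_cast; ring_nf)
  have := (hb.mul_left ((min a 1))⁻¹).mul_left (|b| + 1)
  exact this.congr fun k => by rw [mul_inv]



/-- partial sums -/
noncomputable def psin (n : ℕ) (x : ℝ) : ℝ :=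
  Real.log n - ∑ k ∈ Finset.range (n + 1), (x + (k:ℝ))⁻¹

noncomputable def Pn (n : ℕ) (x : ℝ) : ℝ :=
  x * Real.log n + Real.log (n.factorial) - ∑ k ∈ Finset.range (n + 1), Real.log (x + (k:ℝ))

lemma log_GammaSeq {x : ℝ} (hx : 0 < x) {n : ℕ} (hn : 1 ≤ n) :
    Real.log (Real.GammaSeq x n) = Pn n x := by
  have hn' : (0:ℝ) < n := by exact_mod_cast hn
  have hprod : ∀ k ∈ Finset.range (n + 1), x + (k:ℝ) ≠ 0 := fun k _ => (pos_add hx k).ne'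
  have hprodpos : (0:ℝ) < ∏ j ∈ Finset.range (n + 1), (x + (j:ℝ)) :=
    Finset.prod_pos fun k _ => pos_add hx k
  rw [Real.GammaSeq, Real.log_div (by positivity) hprodpos.ne', Real.log_mul (by positivity)
    (by positivity), Real.log_rpow hn', Real.log_prod hprod, Pn]

lemma tendsto_Pn {x : ℝ} (hx : 0 < x) :
    Tendsto (fun n => Pn n x) atTop (𝓝 (Real.log (Real.Gamma x))) := by
  have h1 : Tendsto (fun n => Real.log (Real.GammaSeq x n)) atTop
      (𝓝 (Real.log (Real.Gamma x))) :=
    (Real.GammaSeq_tendsto_Gamma x).log (Real.Gamma_pos_of_pos hx).ne'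
  apply h1.congr'
  filter_upwards [eventually_ge_atTop 1] with n hn using log_GammaSeq hx hn

lemma hasDerivAt_Pn {x : ℝ} (hx : 0 < x) (n : ℕ) :
    HasDerivAt (fun y => Pn n y) (psin n x) x := by
  have h1 : HasDerivAt (fun y : ℝ => y * Real.log n + Real.log (n.factorial)) (Real.log n) x := by
    simpa using ((hasDerivAt_id x).mul_const (Real.log n)).add_const (Real.log (n.factorial))
  have h2 : HasDerivAt (fun y => ∑ k ∈ Finset.range (n + 1), Real.log (y + (k:ℝ)))
      (∑ k ∈ Finset.range (n + 1), (x + (k:ℝ))⁻¹) x := by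
    apply HasDerivAt.fun_sum
    intro k _
    have : HasDerivAt (fun y : ℝ => y + (k:ℝ)) 1 x := (hasDerivAt_id x).add_const _
    simpa [(pos_add hx k).ne', Function.comp_def] using (Real.hasDerivAt_log (pos_add hx k).ne').comp x this
  exact h1.sub h2

/-- the index-shifted uniform limit of partial sums of `g` -/
lemma unif_g {a b : ℝ} (ha : 0 < a) :
    TendstoUniformlyOn (fun n y => ∑ k ∈ Finset.range (n + 1), g k y)
      (fun y => ∑' k, g k y) atTop (Set.Ioo a b) := by
  have h := tendstoUniformlyOn_tsum_nat (f := g) (summable_majorant (b := b) ha)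
    (fun k y (hy : y ∈ Set.Ioo a b) => g_abs_bound ha hy.1 hy.2 k)
  intro u hu
  exact (tendsto_add_atTop_nat 1).eventually (h u hu)

lemma tendsto_cn : Tendsto (fun n : ℕ =>
    Real.log n - ∑ k ∈ Finset.range (n + 1), ((k:ℝ) + 1)⁻¹) atTop
    (𝓝 (-eulerMascheroniConstant)) := by
  have hH : ∀ n : ℕ, ∑ k ∈ Finset.range (n + 1), ((k:ℝ) + 1)⁻¹ = (harmonic (n+1) : ℝ) := by
    intro n
    rw [harmonic]
    push_cast
    rfl
  have h1 : Tendsto (fun n : ℕ => (harmonic (n+1) : ℝ) - Real.log (n+1)) atTop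
      (𝓝 eulerMascheroniConstant) := by
    have h := Real.tendsto_harmonic_sub_log.comp (tendsto_add_atTop_nat 1)
    apply h.congr
    intro n
    simp only [Function.comp]
    push_cast
    ring
  have h2 : Tendsto (fun n : ℕ => Real.log ((n:ℝ)+1) - Real.log n) atTop (𝓝 0) := by
    have key : Tendsto (fun x : ℝ => Real.log (1 + 1/x)) atTop (𝓝 0) := by
      simpa using (((tendsto_const_nhds (x := (1:ℝ))).div_atTop tendsto_id).const_add 1).log
        (by norm_num)
    have := key.comp tendsto_natCast_atTop_atTop (α := ℕ)
    apply this.congr'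
    filter_upwards [eventually_gt_atTop 0] with n hn
    have hn' : (0:ℝ) < n := by exact_mod_cast hn
    simp only [Function.comp]
    rw [← Real.log_div (by positivity) hn'.ne']
    congr 1
    field_simp
  have h3 := h1.neg.sub h2
  rw [sub_zero] at h3
  apply h3.congr
  intro n
  rw [hH n]
  ring

lemma unif_psin {a b : ℝ} (ha : 0 < a) :
    TendstoUniformlyOn (fun n y => psin n y) dig atTop (Set.Ioo a b) := by
  have hconst : TendstoUniformlyOn (fun (n : ℕ) (_ : ℝ) =>
      Real.log n - ∑ k ∈ Finset.range (n + 1), ((k:ℝ) + 1)⁻¹)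
      (fun _ => -eulerMascheroniConstant) atTop (Set.Ioo a b) := by
    rw [Metric.tendstoUniformlyOn_iff]
    intro ε hε
    filter_upwards [Metric.tendsto_nhds.1 tendsto_cn ε hε] with n hn y _
    simpa [dist_comm] using hn
  have := hconst.add (unif_g (b := b) ha)
  apply this.congr_right ?_ |>.congr ?_
  · intro y _; simp [dig]
  · filter_upwards with n y _
    simp only [Pi.add_apply, psin, g]
    rw [Finset.sum_sub_distrib]
    ring

theorem digamma_eq {x : ℝ} (hx : 0 < x) : digamma x = dig x := by
  have hd : HasDerivAt (fun y => Real.log (Real.Gamma y)) (dig x) x := by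
    apply hasDerivAt_of_tendstoUniformlyOn (s := Set.Ioo (x/2) (x+1)) isOpen_Ioo
      (unif_psin (by linarith))
    · filter_upwards with n y hy
      exact hasDerivAt_Pn (by have := hy.1; linarith) n
    · intro y hy
      exact tendsto_Pn (by have := hy.1; linarith)
    · constructor <;> linarith
  have hdiff : DifferentiableAt ℝ Real.Gamma x :=
    Real.differentiableAt_Gamma fun m => by
      have : (0:ℝ) ≤ m := Nat.cast_nonneg m
      intro h; rw [h] at hx; linarith
  have hd2 : HasDerivAt (fun y => Real.log (Real.Gamma y)) (digamma x) x :=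
    hdiff.hasDerivAt.log (Real.Gamma_pos_of_pos hx).ne'
  exact hd2.unique hd

theorem hasDerivAt_digamma {x : ℝ} (hx : 0 < x) : HasDerivAt digamma (trig x) x := by
  have hdig : HasDerivAt dig (trig x) x := by
    apply hasDerivAt_of_tendstoUniformlyOn (l := atTop) (s := Set.Ioo (x/2) (x+1)) isOpen_Ioo
      (f := fun (n : ℕ) y => -eulerMascheroniConstant + ∑ k ∈ Finset.range n, g k y)
      (f' := fun n y => ∑ k ∈ Finset.range n, ((y + (k:ℝ)) ^ 2)⁻¹)
    · apply tendstoUniformlyOn_tsum_nat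
        (u := fun k : ℕ => (((min (x/2) 1) * ((k:ℝ) + 1)) ^ 2)⁻¹)
      · have hm : 0 < min (x/2) 1 := lt_min (by linarith) one_pos
        refine (base_summable.mul_left (((min (x/2) 1) ^ 2)⁻¹)).congr fun k => ?_
        rw [mul_pow, mul_inv]
      · intro k y hy
        have hy0 : 0 < y := by have := hy.1; linarith
        have h1 : (0:ℝ) < y + k := pos_add hy0 k
        rw [Real.norm_eq_abs, abs_of_nonneg (by positivity)]
        apply inv_anti₀ (by positivity)
        have h3 : min (x/2) 1 * ((k:ℝ) + 1) ≤ y + k := by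
          have hma : min (x/2) 1 ≤ x/2 := min_le_left _ 1
          have hm1 : min (x/2) 1 ≤ 1 := min_le_right _ 1
          have hy1 := hy.1
          have hk0 : (0:ℝ) ≤ (k:ℝ) := Nat.cast_nonneg k
          nlinarith
        exact pow_le_pow_left₀ (by positivity) h3 2
    · filter_upwards with n y hy
      have hy0 : 0 < y := by have := hy.1; linarith
      have : HasDerivAt (fun z => ∑ k ∈ Finset.range n, g k z)
          (∑ k ∈ Finset.range n, ((y + (k:ℝ)) ^ 2)⁻¹) y := by
        apply HasDerivAt.fun_sum
        intro k _
        have hne := (pos_add hy0 k).ne'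
        have h1 : HasDerivAt (fun z : ℝ => z + (k:ℝ)) 1 y := (hasDerivAt_id y).add_const _
        have h2 : HasDerivAt (fun z : ℝ => (z + (k:ℝ))⁻¹) (-((y + (k:ℝ)) ^ 2)⁻¹) y := by
          simpa [Function.comp_def] using (hasDerivAt_inv hne).comp y h1
        have h3 := (hasDerivAt_const y (((k:ℝ) + 1)⁻¹)).sub h2
        simp only [sub_neg_eq_add, zero_add] at h3
        exact h3
      exact this.const_add _
    · intro y hy
      have hy0 : 0 < y := by have := hy.1; linarith
      exact (tendsto_const_nhds.add ((summable_g hy0).hasSum.tendsto_sum_nat)).congr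
        (fun n => rfl)
    · constructor <;> linarith
  have : Set.EqOn digamma dig (Set.Ioi 0) := fun y hy => digamma_eq hy
  apply HasDerivAt.congr_of_eventuallyEq hdig
  filter_upwards [Ioi_mem_nhds hx] with y hy using this hy



/-- difference formula -/
lemma psi_diff {a b : ℝ} (ha : 0 < a) (hb : 0 < b) :
    digamma a - digamma b = ∑' k : ℕ, (a - b) * ((b + k) * (a + k))⁻¹ := by
  rw [digamma_eq ha, digamma_eq hb, dig, dig]
  have h1 : (-eulerMascheroniConstant + ∑' k, g k a) - (-eulerMascheroniConstant + ∑' k, g k b)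
      = (∑' k, g k a) - ∑' k, g k b := by ring
  rw [h1, ← Summable.tsum_sub (summable_g ha) (summable_g hb)]
  apply tsum_congr
  intro k
  have h2 : (0:ℝ) < a + k := pos_add ha k
  have h3 : (0:ℝ) < b + k := pos_add hb k
  simp only [g]
  field_simp
  ring

section main
variable {r x : ℝ} (hr : 0 < r) (hx : 1 ≤ x)

lemma hx0 (hx : 1 ≤ x) : (0:ℝ) < x := lt_of_lt_of_le one_pos hx
lemma hs0 (hr : 0 < r) (hx : 1 ≤ x) : (0:ℝ) < x + r := by linarith [hx0 hx]
lemma hs1 (hr : 0 < r) (hx : 1 ≤ x) : (1:ℝ) ≤ x + r := by linarith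

/-- T series -/
lemma summable_T (hr : 0 < r) (hx : 1 ≤ x) :
    Summable (fun k : ℕ => ((r + k) * (x + r + k) ^ 2)⁻¹) := by
  refine Summable.of_nonneg_of_le (fun k => by positivity) (fun k => ?_)
    (summable_pair hr (hs0 hr hx))
  have h1 := pos_add hr k
  have h2 := pos_add (hs0 hr hx) k
  apply inv_anti₀ (by positivity)
  have h3 : (1:ℝ) ≤ x + r + k := by linarith [Nat.cast_nonneg (α := ℝ) k]
  have h4 : (x + r + (k:ℝ)) ≤ (x + r + k) ^ 2 := by nlinarith
  exact mul_le_mul_of_nonneg_left h4 h1.le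

/-- the key decomposition Δ = x·ψ₁(s) + x²·T -/
lemma Delta_eq (hr : 0 < r) (hx : 1 ≤ x) :
    digamma (x + r) - digamma r
      = x * trig (x + r) + x ^ 2 * (∑' k : ℕ, ((r + k) * (x + r + k) ^ 2)⁻¹) := by
  have h0 := hx0 hx
  have hs := hs0 hr hx
  rw [psi_diff hs hr, trig, ← tsum_mul_left, ← tsum_mul_left, ← Summable.tsum_add
    ((summable_sq hs).mul_left x) ((summable_T hr hx).mul_left (x ^ 2))]
  apply tsum_congr
  intro k
  have h1 := pos_add hr k
  have h2 := pos_add hs k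
  have e : x + r - r = x := by ring
  rw [e]
  field_simp
  ring

lemma trig_pos (ht : (0:ℝ) < x + r) : 0 < trig (x + r) := by
  refine Summable.tsum_pos (summable_sq ht) (fun k => by positivity) 0 ?_
  have := pos_add ht 0
  positivity

lemma Delta_pos (hr : 0 < r) (hx : 1 ≤ x) : 0 < digamma (x + r) - digamma r := by
  have h0 := hx0 hx
  have hs := hs0 hr hx
  rw [Delta_eq hr hx]
  have h1 : 0 ≤ ∑' k : ℕ, ((r + k) * (x + r + k) ^ 2)⁻¹ :=
    tsum_nonneg fun k => by positivity
  nlinarith [trig_pos (x := x) (r := r) hs]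

lemma T_lb (hr : 0 < r) (hx : 1 ≤ x) :
    (r * (x + r) ^ 2)⁻¹ ≤ ∑' k : ℕ, ((r + k) * (x + r + k) ^ 2)⁻¹ := by
  have h := Summable.le_tsum (summable_T hr hx) 0 (fun j _ => by positivity)
  simpa using h

lemma Delta_ub (hr : 0 < r) (hx : 1 ≤ x) :
    digamma (x + r) - digamma r ≤ x * (1 + r * (x + r)) / (r * (x + r)) := by
  have h0 := hx0 hx
  have hs := hs0 hr hx
  rw [psi_diff hs hr]
  have e : x + r - r = x := by ring
  simp_rw [e]
  have hsum : Summable (fun k : ℕ => x * ((r + k) * (x + r + k))⁻¹) :=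
    (summable_pair hr hs).mul_left x
  rw [Summable.tsum_eq_zero_add hsum]
  have hA : x * ((r + (0:ℕ)) * (x + r + (0:ℕ)))⁻¹ = x / (r * (x + r)) := by
    push_cast; rw [add_zero, add_zero]; rw [div_eq_mul_inv]
  have hB : (∑' k : ℕ, x * ((r + (k + 1 : ℕ)) * (x + r + (k + 1 : ℕ)))⁻¹) ≤ x := by
    have htel := hasSum_telescope (x := (1:ℝ)) one_pos
    have htel' : (∑' k : ℕ, (((1:ℝ) + k) * (1 + k + 1))⁻¹) = 1 := by
      simpa using htel.tsum_eq
    have hsum2 : Summable (fun k : ℕ => (((1:ℝ) + k) * (1 + k + 1))⁻¹) := htel.summable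
    have cmp : ∀ k : ℕ, x * ((r + (k + 1 : ℕ)) * (x + r + (k + 1 : ℕ)))⁻¹
        ≤ x * (((1:ℝ) + k) * (1 + k + 1))⁻¹ := by
      intro k
      have hk : (0:ℝ) ≤ k := Nat.cast_nonneg k
      apply mul_le_mul_of_nonneg_left _ h0.le
      apply inv_anti₀ (by positivity)
      push_cast
      nlinarith
    calc (∑' k : ℕ, x * ((r + (k + 1 : ℕ)) * (x + r + (k + 1 : ℕ)))⁻¹)
        ≤ ∑' k : ℕ, x * (((1:ℝ) + k) * (1 + k + 1))⁻¹ := by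
          apply Summable.tsum_le_tsum cmp ((summable_nat_add_iff 1).2 hsum) (hsum2.mul_left x)
      _ = x * 1 := by rw [tsum_mul_left, htel']
      _ = x := mul_one x
  have : x / (r * (x + r)) + x = x * (1 + r * (x + r)) / (r * (x + r)) := by
    field_simp
  rw [hA] at *
  linarith [hB, this.le, this.ge]

lemma E_repr (hr : 0 < r) (hx : 1 ≤ x) :
    digamma (x + r) - digamma x = ∑' k : ℕ, r * ((x + k) * (x + r + k))⁻¹ := by
  have h0 := hx0 hx
  rw [psi_diff (hs0 hr hx) h0]
  apply tsum_congr
  intro k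
  rw [show x + r - x = r by ring]

lemma summable_E1 (hr : 0 < r) (hx : 1 ≤ x) :
    Summable (fun k : ℕ => ((x + k) * (x + r + k))⁻¹) :=
  summable_pair (hx0 hx) (hs0 hr hx)

lemma summable_E2 (hx : 1 ≤ x) :
    Summable (fun k : ℕ => ((x + k) * (x + k + 1))⁻¹) :=
  (hasSum_telescope (hx0 hx)).summable

lemma E_nonpos (hr : 1 ≤ r) (hx : 1 ≤ x) :
    digamma (x + r) - digamma x - r * x⁻¹ ≤ 0 := by
  have h0 := hx0 hx
  have hr0 : (0:ℝ) < r := lt_of_lt_of_le one_pos hr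
  rw [E_repr hr0 hx, ← (hasSum_telescope h0).tsum_eq, sub_nonpos, ← tsum_mul_left]
  apply Summable.tsum_le_tsum _ ((summable_E1 hr0 hx).mul_left r) ((summable_E2 hx).mul_left r)
  intro k
  apply mul_le_mul_of_nonneg_left _ hr0.le
  apply inv_anti₀
  · have := pos_add h0 k; nlinarith
  · have hk : (0:ℝ) ≤ k := Nat.cast_nonneg k
    have := pos_add h0 k
    nlinarith

lemma E_nonneg (hr : 0 < r) (hr1 : r ≤ 1) (hx : 1 ≤ x) :
    0 ≤ digamma (x + r) - digamma x - r * x⁻¹ := by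
  have h0 := hx0 hx
  rw [E_repr hr hx, ← (hasSum_telescope h0).tsum_eq, sub_nonneg, ← tsum_mul_left]
  apply Summable.tsum_le_tsum _ ((summable_E2 hx).mul_left r) ((summable_E1 hr hx).mul_left r)
  intro k
  apply mul_le_mul_of_nonneg_left _ hr.le
  apply inv_anti₀
  · have := pos_add h0 k
    have := pos_add (hs0 hr hx) k
    nlinarith
  · have hk : (0:ℝ) ≤ k := Nat.cast_nonneg k
    have := pos_add h0 k
    nlinarith

lemma E_ub (hr : 0 < r) (hr1 : r ≤ 1) (hx : 1 ≤ x) :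
    digamma (x + r) - digamma x - r * x⁻¹ ≤ r * (1 - r) * (x * (x + r))⁻¹ := by
  have h0 := hx0 hx
  have hs := hs0 hr hx
  have hS1 := summable_E1 hr hx
  have hS2 := summable_E2 hx
  rw [E_repr hr hx, ← (hasSum_telescope h0).tsum_eq, ← tsum_mul_left,
    ← Summable.tsum_sub (hS1.mul_left r) (hS2.mul_left r)]
  have hmaj : ∀ k : ℕ, r * ((x + (k:ℝ)) * (x + r + k))⁻¹ - r * ((x + (k:ℝ)) * (x + k + 1))⁻¹
      ≤ r * (1 - r) * ((x + r) * ((x + (k:ℝ)) * (x + k + 1)))⁻¹ := by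
    intro k
    have h1 := pos_add h0 k
    have h2 := pos_add hs k
    have h3 : (0:ℝ) < x + k + 1 := by linarith
    have hk : (0:ℝ) ≤ k := Nat.cast_nonneg k
    have e1 : r * ((x + (k:ℝ)) * (x + r + k))⁻¹ - r * ((x + (k:ℝ)) * (x + k + 1))⁻¹
        = r * (1 - r) * ((x + (k:ℝ)) * (x + r + k) * (x + k + 1))⁻¹ := by
      field_simp
      ring
    rw [e1]
    apply mul_le_mul_of_nonneg_left _ (by nlinarith : (0:ℝ) ≤ r * (1 - r))
    apply inv_anti₀ (by positivity)
    nlinarith [mul_nonneg (mul_nonneg h1.le h3.le) hk]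
  have e2 : ∀ k : ℕ, r * (1 - r) * (((x + r) * ((x + (k:ℝ)) * (x + k + 1)))⁻¹)
      = (r * (1 - r) * (x + r)⁻¹) * ((x + (k:ℝ)) * (x + k + 1))⁻¹ := by
    intro k; rw [mul_inv]; ring
  have hR : Summable (fun k : ℕ => r * (1 - r) * (((x + r) * ((x + (k:ℝ)) * (x + k + 1)))⁻¹)) :=
    (hS2.mul_left (r * (1 - r) * (x + r)⁻¹)).congr (fun k => (e2 k).symm)
  calc (∑' k : ℕ, (r * ((x + (k:ℝ)) * (x + r + k))⁻¹ - r * ((x + (k:ℝ)) * (x + k + 1))⁻¹))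
      ≤ ∑' k : ℕ, r * (1 - r) * (((x + r) * ((x + (k:ℝ)) * (x + k + 1)))⁻¹) :=
        Summable.tsum_le_tsum hmaj ((hS1.mul_left r).sub (hS2.mul_left r)) hR
    _ = (r * (1 - r) * (x + r)⁻¹) * ∑' k : ℕ, ((x + (k:ℝ)) * (x + k + 1))⁻¹ := by
        rw [← tsum_mul_left]; exact tsum_congr e2
    _ = r * (1 - r) * (x * (x + r))⁻¹ := by
        rw [(hasSum_telescope h0).tsum_eq, mul_inv]; ring

/-- The key inequality: the logarithmic derivative of `h_x^{(r)}/x^r` is nonpositive. -/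
lemma key_ineq (hr : 0 < r) (hx : 1 ≤ x) :
    digamma (x + r) - digamma x - (r + 1) * x⁻¹
      + trig (x + r) / (digamma (x + r) - digamma r) ≤ 0 := by
  have h0 := hx0 hx
  have hs := hs0 hr hx
  set D := digamma (x + r) - digamma r with hD
  set P := trig (x + r) with hP
  set T := ∑' k : ℕ, ((r + k) * (x + r + k) ^ 2)⁻¹ with hT
  have hDpos : 0 < D := Delta_pos hr hx
  have hPpos : 0 < P := trig_pos hs
  have hTnn : 0 ≤ T := tsum_nonneg fun k => by positivity
  have hDeq : D = x * P + x ^ 2 * T := Delta_eq hr hx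
  set E := digamma (x + r) - digamma x - r * x⁻¹ with hE
  have hED : E * D ≤ x * T := by
    rcases le_total 1 r with h1r | hr1
    · have hE0 : E ≤ 0 := E_nonpos h1r hx
      have : E * D ≤ 0 := mul_nonpos_of_nonpos_of_nonneg hE0 hDpos.le
      have : (0:ℝ) ≤ x * T := mul_nonneg h0.le hTnn
      linarith
    · have hE0 : 0 ≤ E := E_nonneg hr hr1 hx
      have hEub : E ≤ r * (1 - r) * (x * (x + r))⁻¹ := E_ub hr hr1 hx
      have hDub : D ≤ x * (1 + r * (x + r)) / (r * (x + r)) := Delta_ub hr hx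
      have step1 : E * D ≤ (r * (1 - r) * (x * (x + r))⁻¹) *
          (x * (1 + r * (x + r)) / (r * (x + r))) := by
        apply mul_le_mul hEub hDub hDpos.le
        exact mul_nonneg (mul_nonneg hr.le (by linarith)) (by positivity)
      have step2 : (r * (1 - r) * (x * (x + r))⁻¹) *
          (x * (1 + r * (x + r)) / (r * (x + r))) ≤ x * (r * (x + r) ^ 2)⁻¹ := by
        rw [div_eq_mul_inv, mul_inv, mul_inv]
        have harith : r * (1 - r) * (1 + r * (x + r)) ≤ x := by
          have b1 : 4 * (r * (1 - r)) ≤ 1 := by nlinarith [sq_nonneg (2 * r - 1)]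
          have b2 : 1 + r * (x + r) ≤ x + 2 := by nlinarith
          have b3 : 0 ≤ r * (1 - r) := by nlinarith
          nlinarith [mul_le_mul (le_of_eq rfl) b2 (by positivity : (0:ℝ) ≤ 1 + r * (x + r)) b3]
        rw [← sub_nonneg]
        have expand : x * (r * (x + r) ^ 2)⁻¹ - r * (1 - r) * (x⁻¹ * (x + r)⁻¹) *
            (x * (1 + r * (x + r)) * (r⁻¹ * (x + r)⁻¹))
            = (x - r * (1 - r) * (1 + r * (x + r))) * (r * (x + r) ^ 2)⁻¹ := by
          field_simp
        rw [expand]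
        apply mul_nonneg (by linarith) (by positivity)
      have step3 : (0:ℝ) ≤ x * T := mul_nonneg h0.le hTnn
      calc E * D ≤ _ := step1
        _ ≤ x * (r * (x + r) ^ 2)⁻¹ := step2
        _ ≤ x * T := mul_le_mul_of_nonneg_left (T_lb hr hx) h0.le
  -- final algebra
  have hfrac : x * T / D + P / D = x⁻¹ := by
    rw [← add_div, div_eq_iff hDpos.ne', hDeq]
    field_simp
    ring
  have hEq : E ≤ x * T / D := by
    rw [le_div_iff₀ hDpos]
    exact hED
  have hexp : digamma (x + r) - digamma x - (r + 1) * x⁻¹ + P / D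
      = E - x⁻¹ + P / D := by rw [hE]; ring
  rw [hexp]
  have : E + P / D ≤ x * T / D + P / D := by linarith
  linarith [hfrac, this]

end main


noncomputable def G (r x : ℝ) : ℝ :=
  Real.log (Real.Gamma (x + r)) - Real.log (Real.Gamma x) - (r + 1) * Real.log x
    + Real.log (digamma (x + r) - digamma r) - Real.log (Real.Gamma r)

lemma hasDerivAt_logGamma {x : ℝ} (hx : 0 < x) :
    HasDerivAt (fun y => Real.log (Real.Gamma y)) (digamma x) x := by
  have hdiff : DifferentiableAt ℝ Real.Gamma x :=
    Real.differentiableAt_Gamma fun m => by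
      have : (0:ℝ) ≤ m := Nat.cast_nonneg m
      intro h; rw [h] at hx; linarith
  exact hdiff.hasDerivAt.log (Real.Gamma_pos_of_pos hx).ne'

lemma hasDerivAt_G {r x : ℝ} (hr : 0 < r) (hx : 1 ≤ x) :
    HasDerivAt (G r) (digamma (x + r) - digamma x - (r + 1) * x⁻¹
      + trig (x + r) / (digamma (x + r) - digamma r)) x := by
  have h0 : (0:ℝ) < x := lt_of_lt_of_le one_pos hx
  have hs : (0:ℝ) < x + r := by linarith
  have h1 : HasDerivAt (fun y => Real.log (Real.Gamma (y + r))) (digamma (x + r)) x :=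
    (hasDerivAt_logGamma hs).comp_add_const
  have h2 : HasDerivAt (fun y => Real.log (Real.Gamma y)) (digamma x) x :=
    hasDerivAt_logGamma h0
  have h3 : HasDerivAt (fun y : ℝ => (r + 1) * Real.log y) ((r + 1) * x⁻¹) x :=
    (Real.hasDerivAt_log h0.ne').const_mul (r + 1)
  have h4 : HasDerivAt (fun y => Real.log (digamma (y + r) - digamma r))
      (trig (x + r) / (digamma (x + r) - digamma r)) x := by
    have hin : HasDerivAt (fun y => digamma (y + r) - digamma r) (trig (x + r)) x :=
      ((hasDerivAt_digamma hs).comp_add_const).sub_const _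
    exact hin.log (Delta_pos hr hx).ne'
  have := (((h1.sub h2).sub h3).add h4).sub_const (Real.log (Real.Gamma r))
  exact this

lemma G_antitone {r : ℝ} (hr : 0 < r) : AntitoneOn (G r) (Set.Ici 1) := by
  apply antitoneOn_of_deriv_nonpos (convex_Ici 1)
  · intro x hx
    exact (hasDerivAt_G hr hx).continuousAt.continuousWithinAt
  · intro x hx
    rw [interior_Ici] at hx
    exact (hasDerivAt_G hr hx.le).differentiableAt.differentiableWithinAt
  · intro x hx
    rw [interior_Ici] at hx
    rw [(hasDerivAt_G hr hx.le).deriv]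
    exact key_ineq hr hx.le

lemma f_eq_exp_G {r x : ℝ} (hr : 0 < r) (hx : 1 ≤ x) :
    hyp r x / x ^ r = Real.exp (G r x) := by
  have h0 : (0:ℝ) < x := lt_of_lt_of_le one_pos hx
  have hs : (0:ℝ) < x + r := by linarith
  have hGp := Real.Gamma_pos_of_pos h0
  have hGsp := Real.Gamma_pos_of_pos hs
  have hGrp := Real.Gamma_pos_of_pos hr
  have hDp := Delta_pos hr hx
  have hxr : (0:ℝ) < x ^ r := Real.rpow_pos_of_pos h0 r
  have hxr1 : (0:ℝ) < x ^ (r + 1) := Real.rpow_pos_of_pos h0 (r + 1)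
  rw [G, Real.exp_sub, Real.exp_add, Real.exp_sub, Real.exp_sub, Real.exp_log hGsp,
    Real.exp_log hGp, Real.exp_log hDp, Real.exp_log hGrp]
  have hexp : Real.exp ((r + 1) * Real.log x) = x ^ (r + 1) := by
    rw [Real.rpow_def_of_pos h0, mul_comm]
  rw [hexp, hyp, if_neg hr.ne', rise]
  have hxadd : x ^ (r + 1) = x ^ r * x := by
    rw [Real.rpow_add h0, Real.rpow_one]
  rw [hxadd]
  field_simp

/-- master lemma -/
lemma master {r : ℝ} (hr : 0 ≤ r) :
    AntitoneOn (fun x => hyp r x / x ^ r) (Set.Ici 1) ∧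
    ContinuousOn (fun x => hyp r x / x ^ r) (Set.Ici 1) ∧
    ∀ x ∈ Set.Ici (1:ℝ), 0 < hyp r x / x ^ r := by
  rcases eq_or_lt_of_le hr with h0 | hpos
  · -- r = 0
    subst h0
    have heq : ∀ x ∈ Set.Ici (1:ℝ), hyp 0 x / x ^ (0:ℝ) = x⁻¹ := by
      intro x hx
      have h0 : (0:ℝ) < x := lt_of_lt_of_le one_pos hx
      rw [hyp, if_pos rfl, Real.rpow_zero, div_one, one_div]
    refine ⟨?_, ?_, ?_⟩
    · intro a ha b hb hab
      simp only
      rw [heq a ha, heq b hb]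
      exact inv_anti₀ (lt_of_lt_of_le one_pos ha) hab
    · apply ContinuousOn.congr (f := fun x : ℝ => x⁻¹) ?_ heq
      exact continuousOn_inv₀.mono fun x hx => by
        have : (0:ℝ) < x := lt_of_lt_of_le one_pos hx
        exact this.ne'
    · intro x hx
      rw [heq x hx]
      have : (0:ℝ) < x := lt_of_lt_of_le one_pos hx
      positivity
  · refine ⟨?_, ?_, ?_⟩
    · intro a ha b hb hab
      simp only
      rw [f_eq_exp_G hpos ha, f_eq_exp_G hpos hb]
      exact Real.exp_le_exp.2 (G_antitone hpos ha hb hab)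
    · apply ContinuousOn.congr (f := fun x => Real.exp (G r x))
        ?_ (fun x hx => f_eq_exp_G hpos hx)
      apply Real.continuous_exp.comp_continuousOn
      intro x hx
      exact (hasDerivAt_G hpos hx).continuousAt.continuousWithinAt
    · intro x hx
      rw [f_eq_exp_G hpos hx]
      exact Real.exp_pos _



section seq
variable {r : ℝ} (hr : 0 ≤ r)

private noncomputable def F (r : ℝ) : ℝ → ℝ := fun x => hyp r x / x ^ r

lemma F_apply {x : ℝ} : F r x = hyp r x / x ^ r := rfl

lemma intInt (hr : 0 ≤ r) {a b : ℝ} (ha : 1 ≤ a) (hab : a ≤ b) :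
    IntervalIntegrable (F r) volume a b := by
  apply ContinuousOn.intervalIntegrable
  apply (master hr).2.1.mono
  rw [Set.uIcc_of_le hab]
  intro x hx
  exact le_trans ha hx.1

lemma nat_one_le {m : ℕ} (hm : 1 ≤ m) : (1:ℝ) ≤ (m:ℝ) := by exact_mod_cast hm

lemma sum_top {m : ℕ} (hm : 1 ≤ m) :
    ∑ k ∈ Finset.Icc 1 m, F r k
      = (∑ k ∈ Finset.Icc 1 (m - 1), F r k) + F r m := by
  obtain ⟨p, rfl⟩ : ∃ p, m = p + 1 := ⟨m - 1, by omega⟩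
  rw [Finset.sum_Icc_succ_top (by omega : 1 ≤ p + 1)]
  simp

lemma int_split (hr : 0 ≤ r) {m : ℕ} (hm : 1 ≤ m) :
    (∫ x in (1:ℝ)..((m:ℝ) + 1), F r x)
      = (∫ x in (1:ℝ)..(m:ℝ), F r x) + ∫ x in (m:ℝ)..((m:ℝ) + 1), F r x :=
  (intervalIntegral.integral_add_adjacent_intervals
    (intInt hr le_rfl (nat_one_le hm))
    (intInt hr (nat_one_le hm) (by linarith))).symm

lemma zdiff (hr : 0 ≤ r) {m : ℕ} (hm : 1 ≤ m) :
    zseq r (m + 1) = zseq r m + (F r m - ∫ x in (m:ℝ)..((m:ℝ) + 1), F r x) := by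
  have h1 : ((m + 1 : ℕ) : ℝ) = (m : ℝ) + 1 := by push_cast; ring
  rw [zseq, zseq, h1]
  simp only [← F_apply]
  rw [int_split hr hm]
  have h2 : (m + 1) - 1 = m := by omega
  rw [h2, sum_top hm]
  ring

lemma ydiff (hr : 0 ≤ r) {m : ℕ} (hm : 1 ≤ m) :
    yseq r (m + 1) = yseq r m + (F r ((m:ℝ) + 1) - ∫ x in (m:ℝ)..((m:ℝ) + 1), F r x) := by
  have h1 : ((m + 1 : ℕ) : ℝ) = (m : ℝ) + 1 := by push_cast; ring
  rw [yseq, yseq, h1]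
  simp only [← F_apply]
  rw [int_split hr hm]
  have h3 : ∑ k ∈ Finset.Icc 1 (m + 1), F r k
      = (∑ k ∈ Finset.Icc 1 m, F r k) + F r ((m:ℝ) + 1) := by
    rw [Finset.sum_Icc_succ_top (by omega : 1 ≤ m + 1)]
    push_cast
    simp
  rw [h3]
  ring

lemma yz (hr : 0 ≤ r) {m : ℕ} (hm : 1 ≤ m) : yseq r m = zseq r m + F r m := by
  rw [yseq, zseq]
  simp only [← F_apply]
  rw [sum_top hm]
  ring

lemma mem_Ici_nat {m : ℕ} (hm : 1 ≤ m) : (m:ℝ) ∈ Set.Ici (1:ℝ) := nat_one_le hm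

lemma int_ub (hr : 0 ≤ r) {m : ℕ} (hm : 1 ≤ m) :
    (∫ x in (m:ℝ)..((m:ℝ) + 1), F r x) ≤ F r m := by
  have hm' := nat_one_le hm
  have : (∫ x in (m:ℝ)..((m:ℝ) + 1), F r x) ≤ ∫ _x in (m:ℝ)..((m:ℝ) + 1), F r m := by
    apply intervalIntegral.integral_mono_on (by linarith) (intInt hr hm' (by linarith))
      intervalIntegrable_const
    intro x hx
    exact (master hr).1 (mem_Ici_nat hm) (le_trans hm' hx.1) hx.1
  simpa using this

lemma int_lb (hr : 0 ≤ r) {m : ℕ} (hm : 1 ≤ m) :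
    F r ((m:ℝ) + 1) ≤ ∫ x in (m:ℝ)..((m:ℝ) + 1), F r x := by
  have hm' := nat_one_le hm
  have : (∫ _x in (m:ℝ)..((m:ℝ) + 1), F r ((m:ℝ)+1)) ≤ ∫ x in (m:ℝ)..((m:ℝ) + 1), F r x := by
    apply intervalIntegral.integral_mono_on (by linarith) intervalIntegrable_const
      (intInt hr hm' (by linarith))
    intro x hx
    exact (master hr).1 (le_trans hm' hx.1) (by simp only [Set.mem_Ici]; linarith) hx.2
  simpa using this

lemma zmono (hr : 0 ≤ r) {p q : ℕ} (hp : 1 ≤ p) (hpq : p ≤ q) : zseq r p ≤ zseq r q := by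
  induction q, hpq using Nat.le_induction with
  | base => exact le_refl _
  | succ q hq ih =>
    have h1 : 1 ≤ q := le_trans hp hq
    have := int_ub hr h1
    rw [zdiff hr h1]
    linarith

lemma yanti (hr : 0 ≤ r) {p q : ℕ} (hp : 1 ≤ p) (hpq : p ≤ q) : yseq r q ≤ yseq r p := by
  induction q, hpq using Nat.le_induction with
  | base => exact le_refl _
  | succ q hq ih =>
    have h1 : 1 ≤ q := le_trans hp hq
    have := int_lb hr h1
    rw [ydiff hr h1]
    linarith

lemma zle (hr : 0 ≤ r) (γh : ℝ) (hz : Tendsto (zseq r) atTop (𝓝 γh)) {m : ℕ} (hm : 1 ≤ m) :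
    zseq r m ≤ γh := by
  apply ge_of_tendsto hz
  filter_upwards [eventually_ge_atTop m] with K hK
  exact zmono hr hm hK

lemma yge (hr : 0 ≤ r) (γh : ℝ) (hy : Tendsto (yseq r) atTop (𝓝 γh)) {m : ℕ} (hm : 1 ≤ m) :
    γh ≤ yseq r m := by
  apply le_of_tendsto hy
  filter_upwards [eventually_ge_atTop m] with K hK
  exact yanti hr hm hK

lemma flim (hr : 0 ≤ r) (γh : ℝ) (hy : Tendsto (yseq r) atTop (𝓝 γh))
    (hz : Tendsto (zseq r) atTop (𝓝 γh)) :
    Tendsto (fun m : ℕ => F r m) atTop (𝓝 0) := by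
  have h := hy.sub hz
  rw [sub_self] at h
  apply h.congr'
  filter_upwards [eventually_ge_atTop 1] with m hm
  rw [yz hr hm]
  ring

/-- if F is eventually constant at integers ≥ m, contradiction with positivity -/
lemma not_int_const (hr : 0 ≤ r) (γh : ℝ) (hy : Tendsto (yseq r) atTop (𝓝 γh))
    (hz : Tendsto (zseq r) atTop (𝓝 γh)) {m : ℕ} (hm : 1 ≤ m)
    (hconst : ∀ K, m ≤ K → F r ((K:ℝ) + 1) = F r K) : False := by
  have hFc : ∀ K, m ≤ K → F r K = F r m := by
    intro K hK
    induction K, hK using Nat.le_induction with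
    | base => rfl
    | succ K hK ih =>
      have := hconst K hK
      rw [show ((K + 1 : ℕ) : ℝ) = (K:ℝ) + 1 by push_cast; ring, this, ih]
  have h1 : Tendsto (fun _ : ℕ => F r m) atTop (𝓝 0) := by
    apply (flim hr γh hy hz).congr'
    filter_upwards [eventually_ge_atTop m] with K hK
    exact hFc K hK
  have h2 : F r m = 0 := tendsto_nhds_unique tendsto_const_nhds h1
  have h3 : 0 < F r m := (master hr).2.2 _ (mem_Ici_nat hm)
  linarith

lemma int_eq_left (hr : 0 ≤ r) {K : ℕ} (hK : 1 ≤ K)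
    (heq : (∫ x in (K:ℝ)..((K:ℝ) + 1), F r x) = F r K) : F r ((K:ℝ) + 1) = F r K := by
  by_contra hne
  have hK' := nat_one_le hK
  have hlt : F r ((K:ℝ) + 1) < F r K :=
    lt_of_le_of_ne ((master hr).1 (mem_Ici_nat hK)
      (by simp only [Set.mem_Ici]; linarith) (by linarith)) hne
  have : (∫ x in (K:ℝ)..((K:ℝ) + 1), F r x) < ∫ _x in (K:ℝ)..((K:ℝ) + 1), F r K := by
    apply intervalIntegral.integral_lt_integral_of_continuousOn_of_le_of_exists_lt
      (by linarith : (K:ℝ) < (K:ℝ) + 1)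
    · exact (master hr).2.1.mono fun x hx => le_trans hK' hx.1
    · exact continuousOn_const
    · intro x hx
      exact (master hr).1 (mem_Ici_nat hK) (Set.mem_Ici.2 (by linarith [hx.1.le])) hx.1.le
    · exact ⟨(K:ℝ) + 1, ⟨by linarith, le_refl _⟩, hlt⟩
  rw [heq] at this
  simp at this

lemma int_eq_right (hr : 0 ≤ r) {K : ℕ} (hK : 1 ≤ K)
    (heq : (∫ x in (K:ℝ)..((K:ℝ) + 1), F r x) = F r ((K:ℝ) + 1)) :
    F r ((K:ℝ) + 1) = F r K := by
  by_contra hne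
  have hK' := nat_one_le hK
  have hlt : F r ((K:ℝ) + 1) < F r K :=
    lt_of_le_of_ne ((master hr).1 (mem_Ici_nat hK)
      (by simp only [Set.mem_Ici]; linarith) (by linarith)) hne
  have : (∫ _x in (K:ℝ)..((K:ℝ) + 1), F r ((K:ℝ) + 1)) < ∫ x in (K:ℝ)..((K:ℝ) + 1), F r x := by
    apply intervalIntegral.integral_lt_integral_of_continuousOn_of_le_of_exists_lt
      (by linarith : (K:ℝ) < (K:ℝ) + 1)
    · exact continuousOn_const
    · exact (master hr).2.1.mono fun x hx => le_trans hK' hx.1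
    · intro x hx
      exact (master hr).1 (Set.mem_Ici.2 (by linarith [hx.1.le])) (Set.mem_Ici.2 (by linarith))
        hx.2
    · exact ⟨(K:ℝ), ⟨le_refl _, by linarith⟩, hlt⟩
  rw [heq] at this
  simp at this

lemma zstrict (hr : 0 ≤ r) (γh : ℝ) (hy : Tendsto (yseq r) atTop (𝓝 γh))
    (hz : Tendsto (zseq r) atTop (𝓝 γh)) {m : ℕ} (hm : 1 ≤ m) : zseq r m < γh := by
  rcases lt_or_ge (zseq r m) γh with h | h
  · exact h
  exfalso
  have hzeq : ∀ K, m ≤ K → zseq r K = γh := by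
    intro K hK
    exact le_antisymm (zle hr γh hz (le_trans hm hK))
      (le_trans h (zmono hr hm hK))
  apply not_int_const hr γh hy hz hm
  intro K hK
  have h1 : 1 ≤ K := le_trans hm hK
  have h2 : zseq r (K + 1) = zseq r K := by rw [hzeq K hK, hzeq (K+1) (by omega)]
  have h3 := zdiff hr h1
  have heq : (∫ x in (K:ℝ)..((K:ℝ) + 1), F r x) = F r K := by
    rw [h2] at h3; linarith
  exact int_eq_left hr h1 heq

lemma ystrict (hr : 0 ≤ r) (γh : ℝ) (hy : Tendsto (yseq r) atTop (𝓝 γh))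
    (hz : Tendsto (zseq r) atTop (𝓝 γh)) {m : ℕ} (hm : 1 ≤ m) : γh < yseq r m := by
  rcases lt_or_ge γh (yseq r m) with h | h
  · exact h
  exfalso
  have hyeq : ∀ K, m ≤ K → yseq r K = γh := by
    intro K hK
    exact le_antisymm (le_trans (yanti hr hm hK) h) (yge hr γh hy (le_trans hm hK))
  apply not_int_const hr γh hy hz hm
  intro K hK
  have h1 : 1 ≤ K := le_trans hm hK
  have h2 : yseq r (K + 1) = yseq r K := by rw [hyeq K hK, hyeq (K+1) (by omega)]
  have h3 := ydiff hr h1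
  have heq : (∫ x in (K:ℝ)..((K:ℝ) + 1), F r x) = F r ((K:ℝ) + 1) := by
    rw [h2] at h3; linarith
  exact int_eq_right hr h1 heq

end seq

end YZaux

theorem yz_estimates (r : ℝ) (hr : 0 ≤ r) (γh : ℝ)
    (hy : Tendsto (yseq r) atTop (𝓝 γh)) (hz : Tendsto (zseq r) atTop (𝓝 γh))
    (n : ℕ) (hn : 1 ≤ n) :
    let A : ℝ := hyp r n / (n : ℝ) ^ r - ∫ x in (n : ℝ)..(n + 1 : ℝ), hyp r x / x ^ r
    let B : ℝ := ∫ x in (n : ℝ)..(n + 1 : ℝ), hyp r x / x ^ r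
    (A < γh - zseq r n ∧ γh - zseq r n < A + hyp r (n + 1) / ((n : ℝ) + 1) ^ r) ∧
    (B - hyp r (n + 1) / ((n : ℝ) + 1) ^ r < yseq r n - γh ∧ yseq r n - γh < B) := by
  intro A B
  have hz1 : zseq r (n + 1) < γh := YZaux.zstrict hr γh hy hz (by omega)
  have hy1 : γh < yseq r (n + 1) := YZaux.ystrict hr γh hy hz (by omega)
  have hzd := YZaux.zdiff hr hn
  have hyzn := YZaux.yz hr hn
  have hyzn1 := YZaux.yz hr (show 1 ≤ n + 1 by omega)
  rw [show ((n + 1 : ℕ) : ℝ) = (n : ℝ) + 1 by push_cast; ring] at hyzn1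
  have hA : A = YZaux.F r n - ∫ x in (n:ℝ)..((n:ℝ) + 1), YZaux.F r x := rfl
  have hB : B = ∫ x in (n:ℝ)..((n:ℝ) + 1), YZaux.F r x := rfl
  have hF1 : hyp r ((n:ℝ) + 1) / ((n : ℝ) + 1) ^ r = YZaux.F r ((n:ℝ) + 1) := rfl
  rw [hF1]
  constructor
  · constructor
    · rw [hA]; linarith
    · rw [hA]; linarith
  · constructor
    · rw [hB]; linarith
    · rw [hB]; linarith
end

section
/- Let r ∈ [0, ∞). For every natural number n ≥ 1, the sequences a_n(r) and b_n(r) satisfy 0 ≤ a_n(r) < a_{n+1}(r), a_{n+1}(r) < b_{n+1}(r) < b_n(r), and b_n(r) ≤ 1/Γ(r+1); in particular, {a_n(r)} is strictly increasing, {b_n(r)} is strictly decreasing, every a_m(r) is less than every b_n(r), and all terms lie in [0, 1/Γ(r+1)]. -/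
open MeasureTheory Filter Topology

namespace AbAux

open Real Set

noncomputable def lg : ℝ → ℝ := Real.log ∘ Real.Gamma
noncomputable def dg : ℝ → ℝ := deriv lg

lemma gamma_diffAt {x : ℝ} (hx : 0 < x) : DifferentiableAt ℝ Real.Gamma x :=
  Real.differentiableAt_Gamma fun m => ((neg_nonpos.mpr (Nat.cast_nonneg m)).trans_lt hx).ne'

lemma lg_diffAt {x : ℝ} (hx : 0 < x) : DifferentiableAt ℝ lg x :=
  (gamma_diffAt hx).log (Real.Gamma_pos_of_pos hx).ne'

lemma dg_eq_digamma {x : ℝ} (hx : 0 < x) : dg x = digamma x := by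
  have h := deriv.log (gamma_diffAt hx) (Real.Gamma_pos_of_pos hx).ne'
  simpa [dg, lg, digamma, Function.comp_def] using h

lemma lg_rec {x : ℝ} (hx : 0 < x) : lg (x + 1) = lg x + Real.log x := by
  simp only [lg, Function.comp_apply, Real.Gamma_add_one hx.ne',
    Real.log_mul hx.ne' (Real.Gamma_pos_of_pos hx).ne', add_comm]

lemma dg_rec {x : ℝ} (hx : 0 < x) : dg (x + 1) = dg x + 1 / x := by
  show deriv lg (x + 1) = deriv lg x + 1 / x
  rw [← deriv_comp_add_const, one_div, ← Real.deriv_log,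
    ← deriv_add (lg_diffAt hx) (Real.differentiableAt_log hx.ne')]
  apply Filter.EventuallyEq.deriv_eq
  filter_upwards [eventually_gt_nhds hx] with y hy
  exact lg_rec hy

lemma dg_mono {x y : ℝ} (hx : 0 < x) (hxy : x < y) : dg x ≤ dg y := by
  have hc := Real.convexOn_log_Gamma
  have hy : 0 < y := hx.trans hxy
  have h1 := hc.deriv_le_slope (mem_Ioi.mpr hx) (mem_Ioi.mpr hy) hxy (lg_diffAt hx)
  have h2 := hc.slope_le_deriv (mem_Ioi.mpr hx) (mem_Ioi.mpr hy) hxy (lg_diffAt hy)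
  exact h1.trans h2

lemma dg_le_log {u : ℝ} (hu : 0 < u) : dg u ≤ Real.log u := by
  have hc := Real.convexOn_log_Gamma
  have h := hc.deriv_le_slope (mem_Ioi.mpr hu) (mem_Ioi.mpr (by linarith : (0:ℝ) < u + 1))
    (lt_add_one u) (lg_diffAt hu)
  rw [slope_def_field, show u + 1 - u = (1:ℝ) by ring, div_one] at h
  have := lg_rec hu
  simp only [lg] at this
  rw [this, add_sub_cancel_left] at h
  exact h

lemma log_le_dg {u : ℝ} (hu : 1 < u) : Real.log (u - 1) ≤ dg u := by
  have hc := Real.convexOn_log_Gamma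
  have hu1 : (0:ℝ) < u - 1 := by linarith
  have h := hc.slope_le_deriv (mem_Ioi.mpr hu1) (mem_Ioi.mpr (by linarith : (0:ℝ) < u))
    (by linarith) (lg_diffAt (by linarith))
  rw [slope_def_field, show u - (u - 1) = (1:ℝ) by ring, div_one,
    show u = (u - 1) + 1 by ring] at h
  have := lg_rec hu1
  simp only [lg] at this
  rw [show u - 1 + 1 - 1 = u - 1 by ring, this, add_sub_cancel_left,
    show u - 1 + 1 = u by ring] at h
  exact h

lemma dg_add_nat {t : ℝ} (ht : 0 < t) (n : ℕ) :
    dg (t + n) = dg t + ∑ k ∈ Finset.range n, 1 / (t + k) := by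
  induction n with
  | zero => simp
  | succ n ih =>
    have h : t + ((n:ℕ)+1:ℕ) = (t + n) + 1 := by push_cast; ring
    rw [h, dg_rec (by positivity), ih, Finset.sum_range_succ]
    ring

lemma summable_sq : Summable (fun k : ℕ => 1 / ((k:ℝ) + 1) ^ 2) := by
  have h : Summable (fun k : ℕ => 1 / ((k:ℝ)) ^ 2) := summable_one_div_nat_pow.mpr one_lt_two
  have h2 := (summable_nat_add_iff 1).mpr h
  apply h2.congr
  intro k
  push_cast
  ring

lemma summable_inv_mul {s t : ℝ} (hs : 0 < s) (ht : 0 < t) :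
    Summable (fun k : ℕ => 1 / ((s + k) * (t + k))) := by
  set c := min s 1 with hc
  set d := min t 1 with hd
  have hc0 : 0 < c := lt_min hs one_pos
  have hd0 : 0 < d := lt_min ht one_pos
  have hbound : ∀ k : ℕ, 1 / ((s + k) * (t + k)) ≤ (1 / (c * d)) * (1 / ((k:ℝ) + 1) ^ 2) := by
    intro k
    have hk : (0:ℝ) ≤ k := Nat.cast_nonneg k
    have h1 : c * ((k:ℝ) + 1) ≤ s + k := by
      have := min_le_left s 1; have := min_le_right s 1; nlinarith
    have h2 : d * ((k:ℝ) + 1) ≤ t + k := by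
      have := min_le_left t 1; have := min_le_right t 1; nlinarith
    have step1 : 1 / ((s + k) * (t + k)) ≤ 1 / ((c * ((k:ℝ)+1)) * (d * ((k:ℝ)+1))) := by
      apply one_div_le_one_div_of_le (by positivity)
      apply mul_le_mul h1 h2 (by positivity) (by linarith)
    have step2 : 1 / ((c * ((k:ℝ)+1)) * (d * ((k:ℝ)+1))) = (1 / (c * d)) * (1 / ((k:ℝ) + 1) ^ 2) := by
      field_simp
    rw [← step2]
    exact step1
  exact Summable.of_nonneg_of_le (fun k => by positivity) hbound (summable_sq.mul_left _)

lemma summable_diff {s t : ℝ} (hs : 0 < s) (ht : 0 < t) :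
    Summable (fun k : ℕ => 1 / (s + k) - 1 / (t + k)) := by
  apply ((summable_inv_mul hs ht).mul_left (t - s)).congr
  intro k
  have h1 : (0:ℝ) < s + k := by positivity
  have h2 : (0:ℝ) < t + k := by positivity
  field_simp
  ring

lemma log_ratio_tendsto (a b : ℝ) :
    Tendsto (fun n : ℕ => Real.log (a + n) - Real.log (b + n)) atTop (𝓝 0) := by
  have hb : Tendsto (fun n : ℕ => b + (n:ℝ)) atTop atTop :=
    tendsto_atTop_add_const_left _ b tendsto_natCast_atTop_atTop
  have ha : Tendsto (fun n : ℕ => a + (n:ℝ)) atTop atTop :=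
    tendsto_atTop_add_const_left _ a tendsto_natCast_atTop_atTop
  have h0 : Tendsto (fun n : ℕ => (a - b) / (b + (n:ℝ))) atTop (𝓝 0) :=
    Filter.Tendsto.div_atTop tendsto_const_nhds hb
  have hratio : Tendsto (fun n : ℕ => (a + (n:ℝ)) / (b + n)) atTop (𝓝 1) := by
    have h1 : Tendsto (fun n : ℕ => 1 + (a - b) / (b + (n:ℝ))) atTop (𝓝 1) := by
      simpa using tendsto_const_nhds.add h0
    apply h1.congr'
    filter_upwards [hb.eventually_gt_atTop 0] with n hn
    field_simp
    ring
  have hlog : Tendsto (fun n : ℕ => Real.log ((a + (n:ℝ)) / (b + n))) atTop (𝓝 0) := by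
    have := (Real.continuousAt_log one_ne_zero).tendsto.comp hratio
    simpa [Function.comp_def] using this
  apply hlog.congr'
  filter_upwards [hb.eventually_gt_atTop 0, ha.eventually_gt_atTop 0] with n hn1 hn2
  rw [Real.log_div hn2.ne' hn1.ne']

lemma dg_sub {s t : ℝ} (hs : 0 < s) (hst : s < t) :
    dg t - dg s = ∑' k : ℕ, (1 / (s + k) - 1 / (t + k)) := by
  have ht : 0 < t := hs.trans hst
  have hsum := summable_diff hs ht
  set S := ∑' k : ℕ, (1 / (s + k) - 1 / (t + k)) with hS
  have hpart : Tendsto (fun n : ℕ => ∑ k ∈ Finset.range n, (1 / (s + k) - 1 / (t + k)))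
      atTop (𝓝 S) := hsum.hasSum.tendsto_sum_nat
  have key : ∀ n : ℕ, dg t - dg s =
      (dg (t + n) - dg (s + n)) + ∑ k ∈ Finset.range n, (1 / (s + k) - 1 / (t + k)) := by
    intro n
    rw [Finset.sum_sub_distrib, dg_add_nat ht n, dg_add_nat hs n]
    ring
  have hlim0 : Tendsto (fun n : ℕ => dg (t + n) - dg (s + n)) atTop (𝓝 0) := by
    have hlow := log_ratio_tendsto (t - 1) s
    have hhigh := log_ratio_tendsto t (s - 1)
    apply tendsto_of_tendsto_of_tendsto_of_le_of_le' hlow hhigh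
    · filter_upwards [eventually_ge_atTop 1] with n hn
      have hn1 : (1:ℝ) ≤ n := by exact_mod_cast hn
      have h1 : Real.log (t + n - 1) ≤ dg (t + n) := by
        have := log_le_dg (u := t + n) (by linarith)
        simpa using this
      have h2 : dg (s + n) ≤ Real.log (s + n) := dg_le_log (by positivity)
      have : t - 1 + (n:ℝ) = t + n - 1 := by ring
      rw [this]
      linarith
    · filter_upwards [eventually_ge_atTop 1] with n hn
      have hn1 : (1:ℝ) ≤ n := by exact_mod_cast hn
      have h1 : dg (t + n) ≤ Real.log (t + n) := dg_le_log (by positivity)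
      have h2 : Real.log (s + n - 1) ≤ dg (s + n) := by
        have := log_le_dg (u := s + n) (by linarith)
        simpa using this
      have : s - 1 + (n:ℝ) = s + n - 1 := by ring
      rw [this]
      linarith
  have hconst : Tendsto (fun _ : ℕ => dg t - dg s) atTop (𝓝 (0 + S)) := by
    apply Filter.Tendsto.congr (fun n => (key n).symm) (hlim0.add hpart)
  have := tendsto_nhds_unique hconst tendsto_const_nhds
  linarith

noncomputable def Fr (r x : ℝ) : ℝ := ∑' k : ℕ, 1 / ((r + k) * (x + r + k))

noncomputable def frf (r x : ℝ) : ℝ := hyp r x / rise x r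

lemma summable_Fr {r x : ℝ} (hr : 0 < r) (hx : 0 < x) :
    Summable (fun k : ℕ => 1 / ((r + k) * (x + r + k))) := by
  have h := summable_inv_mul hr (by linarith : (0:ℝ) < x + r)
  apply h.congr
  intro k
  ring_nf

lemma rise_pos {x r : ℝ} (hx : 0 < x) (hr : 0 ≤ r) : 0 < rise x r :=
  div_pos (Real.Gamma_pos_of_pos (by linarith)) (Real.Gamma_pos_of_pos hx)

lemma frf_eq {r x : ℝ} (hr : 0 < r) (hx : 0 < x) : frf r x = Fr r x / Real.Gamma r := by
  have hxr : 0 < x + r := by linarith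
  have hrise : rise x r ≠ 0 := (rise_pos hx hr.le).ne'
  have hd : digamma (x + r) - digamma r = ∑' k : ℕ, (1 / (r + k) - 1 / (x + r + k)) := by
    rw [← dg_eq_digamma hxr, ← dg_eq_digamma hr]
    exact dg_sub hr (by linarith)
  have hsum : (∑' k : ℕ, (1 / (r + k) - 1 / (x + r + k))) = x * Fr r x := by
    rw [Fr, ← tsum_mul_left]
    apply tsum_congr
    intro k
    have h1 : (0:ℝ) < r + k := by positivity
    have h2 : (0:ℝ) < x + r + k := by positivity
    field_simp
    ring
  have hG : Real.Gamma r ≠ 0 := (Real.Gamma_pos_of_pos hr).ne'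
  rw [frf, hyp, if_neg hr.ne', hd, hsum]
  field_simp

lemma frf_zero {x : ℝ} (hx : 0 < x) : frf 0 x = 1 / x := by
  have h : rise x 0 = 1 := by
    simp [rise, div_self (Real.Gamma_pos_of_pos hx).ne']
  rw [frf, hyp, if_pos rfl, h, div_one]

lemma frf_one {r : ℝ} (hr : 0 ≤ r) : frf r 1 = 1 / Real.Gamma (r + 1) := by
  rcases hr.eq_or_lt' with h | h
  · subst h
    rw [frf_zero one_pos]
    simp [Real.Gamma_one]
  · have h1r : (0:ℝ) < 1 + r := by linarith
    have hd : digamma (1 + r) - digamma r = 1 / r := by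
      rw [← dg_eq_digamma h1r, ← dg_eq_digamma h, add_comm, dg_rec h]
      ring
    have hrise : rise 1 r ≠ 0 := (rise_pos one_pos h.le).ne'
    have hG : Real.Gamma r ≠ 0 := (Real.Gamma_pos_of_pos h).ne'
    rw [frf, hyp, if_neg h.ne', hd, Real.Gamma_add_one h.ne']
    field_simp

lemma frf_anti {r : ℝ} (hr : 0 ≤ r) : StrictAntiOn (frf r) (Set.Ici 1) := by
  intro x hx y hy hxy
  have hx1 : (1:ℝ) ≤ x := hx
  have hy1 : (1:ℝ) ≤ y := hy
  rcases hr.eq_or_lt' with h | h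
  · subst h
    rw [frf_zero (by linarith), frf_zero (by linarith)]
    exact one_div_lt_one_div_of_lt (by linarith) hxy
  · rw [frf_eq h (by linarith), frf_eq h (by linarith)]
    have hFr : Fr r y < Fr r x := by
      apply Summable.tsum_lt_tsum_of_nonneg (i := 0)
      · intro k; positivity
      · intro k
        have hk : (0:ℝ) ≤ k := Nat.cast_nonneg k
        apply one_div_le_one_div_of_le (by positivity)
        have : x + r + k ≤ y + r + k := by linarith
        nlinarith
      · simp only [Nat.cast_zero, add_zero]
        apply one_div_lt_one_div_of_lt (by positivity)
        nlinarith
      · exact summable_Fr h (by linarith)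
    exact (div_lt_div_iff_of_pos_right (Real.Gamma_pos_of_pos h)).mpr hFr

lemma frf_pos {r x : ℝ} (hr : 0 ≤ r) (hx : 1 ≤ x) : 0 < frf r x := by
  rcases hr.eq_or_lt' with h | h
  · subst h
    rw [frf_zero (by linarith)]
    positivity
  · rw [frf_eq h (by linarith)]
    apply div_pos ?_ (Real.Gamma_pos_of_pos h)
    apply Summable.tsum_pos (summable_Fr h (by linarith)) (fun k => by positivity) 0
    simp only [Nat.cast_zero, add_zero]
    positivity

lemma integrable_of_anti {r : ℝ} (hr : 0 ≤ r) {a b : ℝ} (ha : 1 ≤ a) (hab : a ≤ b) :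
    IntervalIntegrable (frf r) MeasureTheory.volume a b := by
  apply AntitoneOn.intervalIntegrable
  apply (frf_anti hr).antitoneOn.mono
  rw [Set.uIcc_of_le hab]
  exact Set.Icc_subset_Ici_self.trans (Set.Ici_subset_Ici.mpr ha)

lemma int_lt_left {r : ℝ} (hr : 0 ≤ r) {a : ℝ} (ha : 1 ≤ a) :
    ∫ x in a..(a+1), frf r x < frf r a := by
  set m := a + 1/2 with hm
  have hm1 : (1:ℝ) ≤ m := by rw [hm]; linarith
  have ham : a ≤ m := by rw [hm]; linarith
  have hma : m ≤ a + 1 := by rw [hm]; linarith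
  have hi1 := integrable_of_anti hr ha ham
  have hi2 := integrable_of_anti hr hm1 hma
  have hsplit : (∫ x in a..(a+1), frf r x) =
      (∫ x in a..m, frf r x) + ∫ x in m..(a+1), frf r x :=
    (intervalIntegral.integral_add_adjacent_intervals hi1 hi2).symm
  have h1 : (∫ x in a..m, frf r x) ≤ (1/2) * frf r a := by
    have hb := intervalIntegral.integral_mono_on ham hi1 intervalIntegrable_const
      (g := fun _ => frf r a)
      (fun x hx => (frf_anti hr).antitoneOn (Set.mem_Ici.mpr ha)
        (Set.mem_Ici.mpr (ha.trans hx.1)) hx.1)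
    rw [intervalIntegral.integral_const, smul_eq_mul, hm] at hb
    linarith
  have h2 : (∫ x in m..(a+1), frf r x) ≤ (1/2) * frf r m := by
    have hb := intervalIntegral.integral_mono_on hma hi2 intervalIntegrable_const
      (g := fun _ => frf r m)
      (fun x hx => (frf_anti hr).antitoneOn (Set.mem_Ici.mpr hm1)
        (Set.mem_Ici.mpr (hm1.trans hx.1)) hx.1)
    rw [intervalIntegral.integral_const, smul_eq_mul, hm] at hb
    have : a + 1 - (a + 1/2) = 1/2 := by ring
    rw [this] at hb
    linarith
  have h3 : frf r m < frf r a := (frf_anti hr) (Set.mem_Ici.mpr ha) (Set.mem_Ici.mpr hm1)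
    (by rw [hm]; linarith)
  rw [hsplit]
  linarith

lemma int_gt_right {r : ℝ} (hr : 0 ≤ r) {a : ℝ} (ha : 1 ≤ a) :
    frf r (a+1) < ∫ x in a..(a+1), frf r x := by
  set m := a + 1/2 with hm
  have hm1 : (1:ℝ) ≤ m := by rw [hm]; linarith
  have ham : a ≤ m := by rw [hm]; linarith
  have hma : m ≤ a + 1 := by rw [hm]; linarith
  have hi1 := integrable_of_anti hr ha ham
  have hi2 := integrable_of_anti hr hm1 hma
  have hsplit : (∫ x in a..(a+1), frf r x) =
      (∫ x in a..m, frf r x) + ∫ x in m..(a+1), frf r x :=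
    (intervalIntegral.integral_add_adjacent_intervals hi1 hi2).symm
  have h1 : (1/2) * frf r m ≤ ∫ x in a..m, frf r x := by
    have hb := intervalIntegral.integral_mono_on ham intervalIntegrable_const hi1
      (f := fun _ => frf r m)
      (fun x hx => (frf_anti hr).antitoneOn (Set.mem_Ici.mpr (ha.trans hx.1))
        (Set.mem_Ici.mpr hm1) hx.2)
    rw [intervalIntegral.integral_const, smul_eq_mul, hm] at hb
    linarith
  have h2 : (1/2) * frf r (a+1) ≤ ∫ x in m..(a+1), frf r x := by
    have hb := intervalIntegral.integral_mono_on hma intervalIntegrable_const hi2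
      (f := fun _ => frf r (a+1))
      (fun x hx => (frf_anti hr).antitoneOn (Set.mem_Ici.mpr (hm1.trans hx.1))
        (Set.mem_Ici.mpr (by linarith : (1:ℝ) ≤ a + 1)) hx.2)
    rw [intervalIntegral.integral_const, smul_eq_mul, hm] at hb
    have : a + 1 - (a + 1/2) = 1/2 := by ring
    rw [this] at hb
    linarith
  have h3 : frf r (a+1) < frf r m := (frf_anti hr) (Set.mem_Ici.mpr hm1)
    (Set.mem_Ici.mpr (by linarith)) (by rw [hm]; linarith)
  rw [hsplit]
  linarith

lemma aseq_def (r : ℝ) (n : ℕ) :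
    aseq r n = (∑ k ∈ Finset.Icc 1 (n-1), frf r (k:ℝ)) - ∫ x in (1:ℝ)..(n:ℝ), frf r x := rfl

lemma bseq_def (r : ℝ) (n : ℕ) :
    bseq r n = (∑ k ∈ Finset.Icc 1 n, frf r (k:ℝ)) - ∫ x in (1:ℝ)..(n:ℝ), frf r x := rfl

lemma sum_Icc_step (g : ℕ → ℝ) (m : ℕ) :
    ∑ k ∈ Finset.Icc 1 (m+1), g k = (∑ k ∈ Finset.Icc 1 m, g k) + g (m+1) :=
  Finset.sum_Icc_succ_top (by omega) g

lemma int_step {r : ℝ} (hr : 0 ≤ r) (m : ℕ) :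
    ∫ x in (1:ℝ)..((m:ℝ)+2), frf r x =
      (∫ x in (1:ℝ)..((m:ℝ)+1), frf r x) + ∫ x in ((m:ℝ)+1)..((m:ℝ)+2), frf r x := by
  have hm : (0:ℝ) ≤ m := Nat.cast_nonneg m
  symm
  apply intervalIntegral.integral_add_adjacent_intervals
  · exact integrable_of_anti hr le_rfl (by linarith)
  · exact integrable_of_anti hr (by linarith) (by linarith)

lemma aseq_one (r : ℝ) : aseq r 1 = 0 := by
  rw [aseq_def]
  norm_num

lemma bseq_one (r : ℝ) : bseq r 1 = frf r 1 := by
  rw [bseq_def]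
  norm_num

lemma aseq_succ {r : ℝ} (hr : 0 ≤ r) (m : ℕ) :
    aseq r (m+2) = aseq r (m+1) +
      (frf r ((m:ℝ)+1) - ∫ x in ((m:ℝ)+1)..((m:ℝ)+2), frf r x) := by
  rw [aseq_def, aseq_def]
  have e1 : Finset.Icc 1 (m+2-1) = Finset.Icc 1 (m+1) := rfl
  have e2 : Finset.Icc 1 (m+1-1) = Finset.Icc 1 m := rfl
  rw [e1, e2, sum_Icc_step]
  have e3 : ((m+2:ℕ):ℝ) = (m:ℝ)+2 := by push_cast; ring
  have e4 : ((m+1:ℕ):ℝ) = (m:ℝ)+1 := by push_cast; ring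
  rw [e3, e4, int_step hr m]
  push_cast
  ring

lemma bseq_succ {r : ℝ} (hr : 0 ≤ r) (m : ℕ) :
    bseq r (m+2) = bseq r (m+1) +
      (frf r ((m:ℝ)+2) - ∫ x in ((m:ℝ)+1)..((m:ℝ)+2), frf r x) := by
  rw [bseq_def, bseq_def, sum_Icc_step]
  have e3 : ((m+2:ℕ):ℝ) = (m:ℝ)+2 := by push_cast; ring
  have e4 : ((m+1:ℕ):ℝ) = (m:ℝ)+1 := by push_cast; ring
  rw [e3, e4, int_step hr m]
  ring

lemma bseq_eq_aseq_add {r : ℝ} (m : ℕ) :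
    bseq r (m+1) = aseq r (m+1) + frf r ((m:ℝ)+1) := by
  rw [bseq_def, aseq_def]
  have e2 : Finset.Icc 1 (m+1-1) = Finset.Icc 1 m := rfl
  rw [e2, sum_Icc_step]
  push_cast
  ring

lemma aseq_lt_succ {r : ℝ} (hr : 0 ≤ r) {n : ℕ} (hn : 1 ≤ n) :
    aseq r n < aseq r (n+1) := by
  obtain ⟨m, rfl⟩ : ∃ m, n = m + 1 := ⟨n - 1, by omega⟩
  have hm : (0:ℝ) ≤ m := Nat.cast_nonneg m
  have h := int_lt_left hr (a := (m:ℝ)+1) (by linarith)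
  have e : (m:ℝ)+1+1 = (m:ℝ)+2 := by ring
  rw [e] at h
  rw [aseq_succ hr m]
  linarith

lemma bseq_succ_lt {r : ℝ} (hr : 0 ≤ r) {n : ℕ} (hn : 1 ≤ n) :
    bseq r (n+1) < bseq r n := by
  obtain ⟨m, rfl⟩ : ∃ m, n = m + 1 := ⟨n - 1, by omega⟩
  have hm : (0:ℝ) ≤ m := Nat.cast_nonneg m
  have h := int_gt_right hr (a := (m:ℝ)+1) (by linarith)
  have e : (m:ℝ)+1+1 = (m:ℝ)+2 := by ring
  rw [e] at h
  rw [bseq_succ hr m]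
  linarith

lemma aseq_lt_bseq {r : ℝ} (hr : 0 ≤ r) {n : ℕ} (hn : 1 ≤ n) :
    aseq r n < bseq r n := by
  obtain ⟨m, rfl⟩ : ∃ m, n = m + 1 := ⟨n - 1, by omega⟩
  have hm : (0:ℝ) ≤ m := Nat.cast_nonneg m
  have := frf_pos hr (x := (m:ℝ)+1) (by linarith)
  rw [bseq_eq_aseq_add]
  linarith

lemma aseq_mono {r : ℝ} (hr : 0 ≤ r) {m n : ℕ} (hm : 1 ≤ m) (hmn : m ≤ n) :
    aseq r m ≤ aseq r n := by
  induction n, hmn using Nat.le_induction with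
  | base => exact le_refl _
  | succ n hn ih => exact ih.trans (aseq_lt_succ hr (le_trans hm hn)).le

lemma bseq_anti {r : ℝ} (hr : 0 ≤ r) {m n : ℕ} (hm : 1 ≤ m) (hmn : m ≤ n) :
    bseq r n ≤ bseq r m := by
  induction n, hmn using Nat.le_induction with
  | base => exact le_refl _
  | succ n hn ih => exact (bseq_succ_lt hr (le_trans hm hn)).le.trans ih

lemma aseq_nonneg {r : ℝ} (hr : 0 ≤ r) {n : ℕ} (hn : 1 ≤ n) : 0 ≤ aseq r n := by
  have := aseq_mono hr (le_refl 1) hn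
  rw [aseq_one] at this
  exact this

lemma bseq_le_top {r : ℝ} (hr : 0 ≤ r) {n : ℕ} (hn : 1 ≤ n) :
    bseq r n ≤ 1 / Real.Gamma (r + 1) := by
  have := bseq_anti hr (le_refl 1) hn
  rw [bseq_one, frf_one hr] at this
  exact this
end AbAux

theorem ab_monotone (r : ℝ) (hr : 0 ≤ r) :
    (∀ n : ℕ, 1 ≤ n →
      0 ≤ aseq r n ∧ aseq r n < aseq r (n + 1) ∧
      aseq r (n + 1) < bseq r (n + 1) ∧ bseq r (n + 1) < bseq r n ∧
      bseq r n ≤ 1 / Real.Gamma (r + 1)) ∧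
    (∀ m n : ℕ, 1 ≤ m → 1 ≤ n → aseq r m < bseq r n) := by
  constructor
  · intro n hn
    exact ⟨AbAux.aseq_nonneg hr hn, AbAux.aseq_lt_succ hr hn,
      AbAux.aseq_lt_bseq hr (by omega), AbAux.bseq_succ_lt hr hn, AbAux.bseq_le_top hr hn⟩
  · intro m n hm hn
    have h1 : aseq r m ≤ aseq r (max m n) := AbAux.aseq_mono hr hm (le_max_left m n)
    have h2 : aseq r (max m n) < bseq r (max m n) := AbAux.aseq_lt_bseq hr (by omega)
    have h3 : bseq r (max m n) ≤ bseq r n := AbAux.bseq_anti hr hn (le_max_right m n)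
    linarith
end

section
/- For all natural numbers n ≥ 1 and r ≥ 1, ∑_{k=1}^n H_{k+r−1}/k = (H_n² + H_n^{(2)})/2 + ∑_{j=1}^{r−1} (H_j/j + H_{j−1}/(j+n)) − H_{r−1}·(H_{n+r−1} − H_n), where H_m = ∑_{k=1}^m 1/k are the harmonic numbers, H_m^{(2)} = ∑_{k=1}^m 1/k², and empty sums are zero (H_0 = 0). -/
open MeasureTheory Filter Topology

/-- The `m`-th harmonic number `H_m = ∑_{k=1}^m 1/k` (with `H 0 = 0`). -/
noncomputable def H (m : ℕ) : ℝ := ∑ k ∈ Finset.Icc 1 m, (1 : ℝ) / k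

/-- The generalized harmonic number `H_m^{(s)} = ∑_{k=1}^m 1/k^s`. -/
noncomputable def Hgen (m s : ℕ) : ℝ := ∑ k ∈ Finset.Icc 1 m, (1 : ℝ) / (k : ℝ) ^ s

/-- The unsigned Stirling numbers of the first kind, via the recurrence
`[n+1, k+1] = n·[n, k+1] + [n, k]`, `[0,0] = 1`. -/
def stirling1 : ℕ → ℕ → ℕ
  | 0, 0 => 1
  | 0, _ + 1 => 0
  | _ + 1, 0 => 0
  | n + 1, k + 1 => n * stirling1 n (k + 1) + stirling1 n k

lemma H_succ (m : ℕ) : H (m + 1) = H m + 1 / (m + 1) := by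
  unfold H
  rw [Finset.sum_Icc_succ_top (by omega)]
  push_cast
  ring

lemma Hgen2_succ (m : ℕ) : Hgen (m + 1) 2 = Hgen m 2 + 1 / ((m : ℝ) + 1) ^ 2 := by
  unfold Hgen
  rw [Finset.sum_Icc_succ_top (by omega)]
  push_cast
  ring

lemma base_case (n : ℕ) :
    ∑ k ∈ Finset.Icc 1 n, H k / (k : ℝ) = ((H n) ^ 2 + Hgen n 2) / 2 := by
  induction n with
  | zero => simp [H, Hgen]
  | succ n ih =>
    rw [Finset.sum_Icc_succ_top (by omega), ih, H_succ, Hgen2_succ]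
    have h : (n : ℝ) + 1 ≠ 0 := by positivity
    push_cast
    field_simp
    ring

lemma frac_sum (n r : ℕ) (hr : 1 ≤ r) :
    ∑ k ∈ Finset.Icc 1 n, (1 : ℝ) / ((k : ℝ) * ((k : ℝ) + r)) =
      (H n + H r - H (n + r)) / r := by
  induction n with
  | zero => simp [H]
  | succ n ih =>
    rw [Finset.sum_Icc_succ_top (by omega), ih]
    have e : n + 1 + r = (n + r) + 1 := by omega
    rw [e, H_succ, H_succ]
    have h1 : (n : ℝ) + 1 ≠ 0 := by positivity
    have h2 : (r : ℝ) ≠ 0 := by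
      have : (0:ℝ) < r := by exact_mod_cast hr
      linarith
    have h3 : ((n + r : ℕ) : ℝ) + 1 ≠ 0 := by positivity
    push_cast
    have h4 : (n : ℝ) + 1 + r ≠ 0 := by positivity
    field_simp
    ring

theorem harmonic_shift_sum (n r : ℕ) (hn : 1 ≤ n) (hr : 1 ≤ r) :
    ∑ k ∈ Finset.Icc 1 n, H (k + r - 1) / (k : ℝ) =
      ((H n) ^ 2 + Hgen n 2) / 2 +
        ∑ j ∈ Finset.Icc 1 (r - 1), (H j / (j : ℝ) + H (j - 1) / ((j : ℝ) + n)) -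
        H (r - 1) * (H (n + r - 1) - H n) := by
  induction r, hr using Nat.le_induction with
  | base =>
    have h0 : H 0 = 0 := by simp [H]
    simp only [Nat.add_sub_cancel, Nat.sub_self, h0, show Finset.Icc 1 0 = (∅ : Finset ℕ) by rfl,
      Finset.sum_empty]
    rw [base_case]
    ring
  | succ r hr ih =>
    have hr0 : (r : ℝ) ≠ 0 := by
      have : (0:ℝ) < r := by exact_mod_cast hr
      linarith
    have key : ∀ k ∈ Finset.Icc 1 n,
        H (k + (r + 1) - 1) / (k : ℝ) =
          H (k + r - 1) / (k : ℝ) + 1 / ((k : ℝ) * ((k : ℝ) + r)) := by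
      intro k hk
      simp only [Finset.mem_Icc] at hk
      have e1 : k + (r + 1) - 1 = (k + r - 1) + 1 := by omega
      rw [e1, H_succ]
      have e2 : ((k + r - 1 : ℕ) : ℝ) + 1 = (k : ℝ) + r := by
        have : (k + r - 1 : ℕ) + 1 = k + r := by omega
        have := congrArg (Nat.cast : ℕ → ℝ) this
        push_cast at this
        linarith
      rw [e2]
      have hk0 : (k : ℝ) ≠ 0 := by
        have : (0:ℝ) < k := by exact_mod_cast hk.1
        linarith
      have hkr : (k : ℝ) + r ≠ 0 := by positivity
      field_simp
    rw [Finset.sum_congr rfl key, Finset.sum_add_distrib, ih, frac_sum n r hr]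
    -- now pure algebra on the RHS
    have e3 : r + 1 - 1 = r := by omega
    rw [e3]
    have e4 : ∑ j ∈ Finset.Icc 1 r, (H j / (j : ℝ) + H (j - 1) / ((j : ℝ) + n)) =
        ∑ j ∈ Finset.Icc 1 (r - 1), (H j / (j : ℝ) + H (j - 1) / ((j : ℝ) + n)) +
          (H r / (r : ℝ) + H (r - 1) / ((r : ℝ) + n)) := by
      have : r = (r - 1) + 1 := by omega
      rw [this, Finset.sum_Icc_succ_top (by omega)]
      rw [← this]
    rw [e4]
    have e5 : n + (r + 1) - 1 = (n + r - 1) + 1 := by omega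
    rw [e5, H_succ]
    have e6 : ((n + r - 1 : ℕ) : ℝ) + 1 = (n : ℝ) + r := by
      have : (n + r - 1 : ℕ) + 1 = n + r := by omega
      have := congrArg (Nat.cast : ℕ → ℝ) this
      push_cast at this
      linarith
    rw [e6]
    have e7 : H r = H (r - 1) + 1 / (r : ℝ) := by
      have hc : ((r - 1 : ℕ) : ℝ) + 1 = (r : ℝ) := by
        have h : (r - 1 : ℕ) + 1 = r := by omega
        exact_mod_cast congrArg (Nat.cast : ℕ → ℝ) h
      conv_lhs => rw [show r = (r - 1) + 1 by omega]
      rw [H_succ, hc]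
    have e8 : H (n + r) = H (n + r - 1) + 1 / ((n : ℝ) + r) := by
      conv_lhs => rw [show n + r = (n + r - 1) + 1 by omega]
      rw [H_succ, e6]
    rw [e7, e8]
    have hnr : (n : ℝ) + r ≠ 0 := by positivity
    field_simp
    ring
end
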